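/- arXiv:2407.14809 — 3 statements merged into one kernel-verified Lean document; each statement's English description precedes it below -/
import Mathlib

section
/- Let λ ∈ ℂ ∪ {∞}, let X denote either A or B, and let σ be a Lie algebra automorphism of W_X(λ). Then σ maps the subspace spanned by {X_n : n ∈ ℤ} into itself, and there exist an inner automorphism ρ of W_X(λ) (a finite product of automorphisms exp(ad_w) = id + ad_w with w in the span of {X_n : n ∈ ℤ}), a sign ε ∈ {1, −1}, a scalar α ∈ ℂ \ {0}, complex numbers γ_n (n ∈ ℤ), and nonzero complex numbers ξ_n (n ∈ ℤ) such that (ρ ∘ σ)(L_n) = ε·αⁿ·L_{εn} + γ_n·X_{εn} and (ρ ∘ σ)(X_n) = ξ_n·X_{εn} for all n ∈ ℤ. Moreover, if X = A then γ_0 = 0. -/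
/-- The coefficient `n(n+1)λ`, where `λ = ∞` (encoded by `none`) gives `n²`. -/
def lamTerm (lam : Option ℂ) (n : ℤ) : ℂ :=
  match lam with
  | some l => (n : ℂ) * ((n : ℂ) + 1) * l
  | none => (n : ℂ) ^ 2

/-- Structure constant for the bracket `[L_n, A_m]` in `W_A(λ)`. -/
def omegaA (lam : Option ℂ) (n m : ℤ) : ℂ :=
  (n : ℂ) + (m : ℂ) + (if m = 0 then lamTerm lam n else 0)

/-- Structure constant for the bracket `[L_n, B_m]` in `W_B(λ)`. -/
def omegaB (lam : Option ℂ) (n m : ℤ) : ℂ :=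
  (m : ℂ) - (if n + m = 0 then lamTerm lam n else 0)

open Finsupp

section Setup
variable {L : Type} [LieRing L] [LieAlgebra ℂ L] (b : Module.Basis (ℤ ⊕ ℤ) ℂ L) (ω : ℤ → ℤ → ℂ)

noncomputable def PL : L →ₗ[ℂ] (ℤ →₀ ℂ) :=
  (Finsupp.lcomapDomain Sum.inl Sum.inl_injective).comp b.repr.toLinearMap
noncomputable def QL : L →ₗ[ℂ] (ℤ →₀ ℂ) :=
  (Finsupp.lcomapDomain Sum.inr Sum.inr_injective).comp b.repr.toLinearMap
@[simp] lemma PL_apply (x : L) (k : ℤ) : PL b x k = b.repr x (Sum.inl k) := rfl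
@[simp] lemma QL_apply (x : L) (k : ℤ) : QL b x k = b.repr x (Sum.inr k) := rfl
@[simp] lemma PL_L (n : ℤ) : PL b (b (Sum.inl n)) = Finsupp.single n 1 := by
  ext k; simp [Finsupp.single_apply, Sum.inl.injEq]
@[simp] lemma PL_X (n : ℤ) : PL b (b (Sum.inr n)) = 0 := by
  ext k; simp [Finsupp.single_apply]
@[simp] lemma QL_X (n : ℤ) : QL b (b (Sum.inr n)) = Finsupp.single n 1 := by
  ext k; simp [Finsupp.single_apply, Sum.inr.injEq]
@[simp] lemma QL_L (n : ℤ) : QL b (b (Sum.inl n)) = 0 := by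
  ext k; simp [Finsupp.single_apply]

lemma eq_zero_of_PQ (x : L) (hP : PL b x = 0) (hQ : QL b x = 0) : x = 0 := by
  have h : b.repr x = 0 := by
    ext i
    cases i with
    | inl k => exact DFunLike.congr_fun hP k
    | inr k => exact DFunLike.congr_fun hQ k
  simpa using congrArg b.repr.symm h

/-- generic bilinear coefficient form -/
noncomputable def bform {M : Type} [AddCommGroup M] [Module ℂ M]
    (A B : M →ₗ[ℂ] (ℤ →₀ ℂ)) (g : ℤ → ℤ → ℂ) (k : ℤ) : M →ₗ[ℂ] M →ₗ[ℂ] ℂ :=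
  LinearMap.mk₂ ℂ (fun x y => (A x).sum fun i c => c * B y (k - i) * g i (k - i))
    (by
      intro x x' y
      simp only [map_add]
      exact Finsupp.sum_add_index' (by intro a; ring) (by intro a c c'; ring))
    (by
      intro c x y
      simp only [map_smul, smul_eq_mul]
      rw [Finsupp.sum_smul_index (by intro i; ring), Finsupp.mul_sum]
      exact Finsupp.sum_congr (by intro i _; ring))
    (by
      intro x y y'
      simp only [map_add, Finsupp.add_apply]
      rw [← Finsupp.sum_add]
      exact Finsupp.sum_congr (by intro i _; ring))
    (by
      intro c x y
      simp only [map_smul, Finsupp.smul_apply, smul_eq_mul]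
      rw [Finsupp.mul_sum]
      exact Finsupp.sum_congr (by intro i _; ring))

@[simp] lemma bform_apply {M : Type} [AddCommGroup M] [Module ℂ M]
    (A B : M →ₗ[ℂ] (ℤ →₀ ℂ)) (g : ℤ → ℤ → ℂ) (k : ℤ) (x y : M) :
    bform A B g k x y = (A x).sum fun i c => c * B y (k - i) * g i (k - i) := rfl

variable (hLL : ∀ n m : ℤ,
      ⁅b (Sum.inl n), b (Sum.inl m)⁆ = ((m : ℂ) - (n : ℂ)) • b (Sum.inl (n + m)))
    (hLX : ∀ n m : ℤ, ⁅b (Sum.inl n), b (Sum.inr m)⁆ = ω n m • b (Sum.inr (n + m)))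
    (hXX : ∀ n m : ℤ, ⁅b (Sum.inr n), b (Sum.inr m)⁆ = 0)

include hLL hLX hXX in
lemma coeffL (x y : L) (k : ℤ) :
    PL b ⁅x, y⁆ k = (PL b x).sum fun i c => c * PL b y (k - i) * ((k : ℂ) - i - i) := by
  let F : L →ₗ[ℂ] L →ₗ[ℂ] ℂ := LinearMap.mk₂ ℂ (fun x y => PL b ⁅x, y⁆ k)
    (by intro x x' y; simp [add_lie, -PL_apply])
    (by intro c x y; simp [smul_lie, -PL_apply])
    (by intro x y y'; simp [lie_add, -PL_apply])
    (by intro c x y; simp [lie_smul, -PL_apply])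
  have hFG : F = bform (PL b) (PL b) (fun i j => (j : ℂ) - i) k := by
    apply b.ext; intro s
    apply b.ext; intro t
    simp only [F, LinearMap.mk₂_apply, bform_apply]
    cases s with
    | inl n =>
      cases t with
      | inl m =>
        rw [hLL]
        simp only [map_smul, PL_L, Finsupp.smul_apply, smul_eq_mul]
        rw [Finsupp.sum_single_index (by ring)]
        by_cases h : k = n + m
        · subst h
          rw [Finsupp.single_apply, Finsupp.single_apply, if_pos rfl,
            if_pos (show m = n + m - n by omega)]
          push_cast
          ring
        · rw [Finsupp.single_apply, Finsupp.single_apply, if_neg (by omega),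
            if_neg (by omega)]
          ring
      | inr m =>
        rw [hLX]
        simp only [map_smul, PL_X, PL_L, Finsupp.smul_apply, smul_eq_mul]
        rw [Finsupp.sum_single_index (by ring)]
        simp
    | inr n =>
      cases t with
      | inl m =>
        rw [← lie_skew, hLX]
        simp
      | inr m =>
        rw [hXX]
        simp
  have := DFunLike.congr_fun (DFunLike.congr_fun hFG x) y
  simpa [F] using this

include hLL hLX hXX in
lemma coeffX (x y : L) (k : ℤ) :
    QL b ⁅x, y⁆ k = ((PL b x).sum fun i c => c * QL b y (k - i) * ω i (k - i))
      - ((PL b y).sum fun i c => c * QL b x (k - i) * ω i (k - i)) := by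
  let F : L →ₗ[ℂ] L →ₗ[ℂ] ℂ := LinearMap.mk₂ ℂ (fun x y => QL b ⁅x, y⁆ k)
    (by intro x x' y; simp [add_lie, -QL_apply])
    (by intro c x y; simp [smul_lie, -QL_apply])
    (by intro x y y'; simp [lie_add, -QL_apply])
    (by intro c x y; simp [lie_smul, -QL_apply])
  have hFG : F = bform (PL b) (QL b) ω k - (bform (PL b) (QL b) ω k).flip := by
    apply b.ext; intro s
    apply b.ext; intro t
    simp only [F, LinearMap.mk₂_apply, LinearMap.sub_apply, LinearMap.flip_apply,
      bform_apply]
    cases s with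
    | inl n =>
      cases t with
      | inl m =>
        rw [hLL]
        simp
      | inr m =>
        rw [hLX]
        simp only [map_smul, PL_X, PL_L, QL_X, QL_L, Finsupp.smul_apply, smul_eq_mul]
        rw [Finsupp.sum_single_index (by ring), Finsupp.sum_zero_index]
        by_cases h : k = n + m
        · subst h
          rw [Finsupp.single_apply, Finsupp.single_apply, if_pos rfl,
            if_pos (show m = n + m - n by omega)]
          rw [show n + m - n = m by omega]
          ring
        · rw [Finsupp.single_apply, Finsupp.single_apply, if_neg (by omega),
            if_neg (by omega)]
          ring
    | inr n =>
      cases t with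
      | inl m =>
        rw [← lie_skew, hLX]
        simp only [map_neg, map_smul, PL_X, PL_L, QL_X, QL_L, Finsupp.neg_apply,
          Finsupp.smul_apply, smul_eq_mul, Finsupp.sum_zero_index]
        rw [Finsupp.sum_single_index (by ring)]
        by_cases h : k = m + n
        · subst h
          rw [Finsupp.single_apply, Finsupp.single_apply, if_pos rfl,
            if_pos (show n = m + n - m by omega)]
          rw [show m + n - m = n by omega]
          ring
        · rw [Finsupp.single_apply, Finsupp.single_apply, if_neg (by omega),
            if_neg (by omega)]
          ring
      | inr m =>
        rw [hXX]
        simp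
  have := DFunLike.congr_fun (DFunLike.congr_fun hFG x) y
  simpa [F] using this

lemma mem_span_iff_PL (x : L) :
    x ∈ Submodule.span ℂ (Set.range fun n : ℤ => b (Sum.inr n)) ↔ PL b x = 0 := by
  constructor
  · intro hx
    induction hx using Submodule.span_induction with
    | mem y hy => obtain ⟨n, rfl⟩ := hy; simp
    | zero => simp
    | add _ _ _ _ h1 h2 => simp [map_add, h1, h2]
    | smul c _ _ h => simp [map_smul, h]
  · intro h
    rw [← b.linearCombination_repr x, Finsupp.linearCombination_apply, Finsupp.sum]
    apply Submodule.sum_mem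
    intro i hi
    cases i with
    | inl k =>
      have hk : b.repr x (Sum.inl k) = 0 := DFunLike.congr_fun h k
      rw [hk, zero_smul]
      exact Submodule.zero_mem _
    | inr k => exact Submodule.smul_mem _ _ (Submodule.subset_span ⟨k, rfl⟩)

include hLL hLX hXX in
lemma lie_PL_zero (x y : L) (hx : PL b x = 0) : PL b ⁅x, y⁆ = 0 := by
  ext k
  rw [coeffL b ω hLL hLX hXX, hx]
  simp

include hLL hLX hXX in
lemma lie_I_I (x y : L) (hx : PL b x = 0) (hy : PL b y = 0) : ⁅x, y⁆ = 0 := by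
  refine eq_zero_of_PQ b _ (lie_PL_zero b ω hLL hLX hXX x y hx) ?_
  ext k
  rw [coeffX b ω hLL hLX hXX, hx, hy]
  simp

include hLL hLX hXX in
lemma ad2_of_mem (x : L) (hx : PL b x = 0) (y : L) : ⁅x, ⁅x, y⁆⁆ = 0 :=
  lie_I_I b ω hLL hLX hXX x ⁅x, y⁆ hx (lie_PL_zero b ω hLL hLX hXX x y hx)

include hLL hLX hXX in
lemma mem_of_ad2 (x : L) (h2 : ∀ y : L, ⁅x, ⁅x, y⁆⁆ = 0) : PL b x = 0 := by
  by_contra hp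
  set p := PL b x with hpdef
  have hne : p.support.Nonempty := Finsupp.support_nonempty_iff.mpr hp
  set M := p.support.max' hne with hM
  have hMmem : M ∈ p.support := Finset.max'_mem _ _
  have hpM : p M ≠ 0 := Finsupp.mem_support_iff.mp hMmem
  have habs : M ≤ |M| := le_abs_self M
  have habs2 : 0 ≤ |M| := abs_nonneg M
  set k := |M| + 1 with hk
  have hk0 : k ≠ 0 := by omega
  have hkM : M < k := by omega
  set z := ⁅x, b (Sum.inl k)⁆ with hz
  have hzc : ∀ j : ℤ, PL b z j = p (j - k) * (2 * (k : ℂ) - (j : ℂ)) := by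
    intro j
    rw [hz, coeffL b ω hLL hLX hXX, Finsupp.sum]
    rw [Finset.sum_eq_single (j - k)]
    · rw [PL_L, Finsupp.single_apply, if_pos (by omega)]
      push_cast
      ring
    · intro i _ hi
      rw [PL_L, Finsupp.single_apply, if_neg (by omega)]
      ring
    · intro hnot
      rw [Finsupp.notMem_support_iff.mp hnot]
      ring
  have hsum : PL b ⁅x, z⁆ (2 * M + k)
      = p M * (p M * (2 * (k : ℂ) - ((M : ℂ) + k))) * ((k : ℂ)) := by
    rw [coeffL b ω hLL hLX hXX, Finsupp.sum]
    rw [Finset.sum_eq_single M]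
    · rw [hzc]
      rw [show (2 * M + k - M - k : ℤ) = M by ring]
      rw [show (2 * M + k - M : ℤ) = M + k by ring]
      push_cast
      ring
    · intro i hi hiM
      rw [hzc]
      have hile : i ≤ M := Finset.le_max' _ _ hi
      rw [show (2 * M + k - i - k : ℤ) = 2 * M - i by ring]
      have hout : p (2 * M - i) = 0 := by
        apply Finsupp.notMem_support_iff.mp
        intro hmem
        have := Finset.le_max' _ _ hmem
        omega
      rw [hout]
      ring
    · intro hnot
      exact absurd hMmem hnot
  have hzero : PL b ⁅x, z⁆ (2 * M + k) = 0 := by rw [h2 (b (Sum.inl k))]; simp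
  rw [hzero] at hsum
  have key : p M * p M * (((k : ℂ) - M) * k) = 0 := by
    push_cast at hsum ⊢
    linear_combination -hsum
  rcases mul_eq_zero.mp key with h | h
  · exact hpM (by rcases mul_eq_zero.mp h with h' | h' <;> exact h')
  · rcases mul_eq_zero.mp h with h' | h'
    · have hcast : (k : ℂ) = (M : ℂ) := by linear_combination h'
      exact absurd (Int.cast_injective hcast) (by omega)
    · exact hk0 (by exact_mod_cast h')

include hLL hLX hXX in
lemma sigma_preserves (σ : L ≃ₗ⁅ℂ⁆ L) (x : L) (hx : PL b x = 0) : PL b (σ x) = 0 := by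
  apply mem_of_ad2 b ω hLL hLX hXX
  intro y
  have h := ad2_of_mem b ω hLL hLX hXX x hx (σ.symm y)
  have : σ ⁅x, ⁅x, σ.symm y⁆⁆ = ⁅σ x, ⁅σ x, y⁆⁆ := by
    rw [LieEquiv.map_lie, LieEquiv.map_lie, σ.apply_symm_apply]
  rw [← this, h]
  exact σ.toLieHom.map_zero

include hLL hLX hXX in
lemma coeffX_single (x y : L) (k : ℤ) (s s' : ℤ) (cs cs' : ℂ)
    (hx : PL b x = Finsupp.single s cs) (hy : PL b y = Finsupp.single s' cs') :
    QL b ⁅x, y⁆ k = cs * QL b y (k - s) * ω s (k - s)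
      - cs' * QL b x (k - s') * ω s' (k - s') := by
  rw [coeffX b ω hLL hLX hXX, hx, hy, Finsupp.sum_single_index (by ring),
    Finsupp.sum_single_index (by ring)]

lemma recon (v : L) (s t : ℤ) (βv γv : ℂ)
    (hP : PL b v = Finsupp.single s βv) (hQ : QL b v = Finsupp.single t γv) :
    v = βv • b (Sum.inl s) + γv • b (Sum.inr t) := by
  apply b.repr.injective
  ext i
  rw [map_add, map_smul, map_smul, b.repr_self, b.repr_self]
  cases i with
  | inl k =>
    have h := DFunLike.congr_fun hP k
    rw [PL_apply] at h
    rw [h, Finsupp.single_apply, Finsupp.add_apply, Finsupp.smul_apply,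
      Finsupp.smul_apply, smul_eq_mul, smul_eq_mul, Finsupp.single_apply,
      Finsupp.single_apply]
    by_cases hsk : s = k
    · subst hsk
      rw [if_pos rfl, if_pos rfl, if_neg (show ¬Sum.inr t = Sum.inl s by simp)]
      ring
    · rw [if_neg hsk, if_neg (show ¬Sum.inl s = Sum.inl k by simp [hsk]),
        if_neg (show ¬Sum.inr t = Sum.inl k by simp)]
      ring
  | inr k =>
    have h := DFunLike.congr_fun hQ k
    rw [QL_apply] at h
    rw [h, Finsupp.single_apply, Finsupp.add_apply, Finsupp.smul_apply,
      Finsupp.smul_apply, smul_eq_mul, smul_eq_mul, Finsupp.single_apply,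
      Finsupp.single_apply]
    by_cases htk : t = k
    · subst htk
      rw [if_pos rfl, if_pos rfl, if_neg (show ¬Sum.inl s = Sum.inr t by simp)]
      ring
    · rw [if_neg htk, if_neg (show ¬Sum.inl s = Sum.inr k by simp),
        if_neg (show ¬Sum.inr t = Sum.inr k by simp [htk])]
      ring

lemma reconX (v : L) (t : ℤ) (γv : ℂ)
    (hP : PL b v = 0) (hQ : QL b v = Finsupp.single t γv) :
    v = γv • b (Sum.inr t) := by
  have := recon b v 0 t 0 γv (by rw [hP, Finsupp.single_zero]) hQ
  rw [this, zero_smul, zero_add]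

end Setup

lemma lamTerm_zero (lam : Option ℂ) : lamTerm lam 0 = 0 := by
  cases lam <;> simp [lamTerm]


lemma witt_core (y : ℤ → (ℤ →₀ ℂ))
    (hne : ∀ n : ℤ, y n ≠ 0)
    (hbr : ∀ n m k : ℤ, ((y n).sum fun i c => c * y m (k - i) * ((k : ℂ) - i - i))
        = ((m : ℂ) - n) * y (n + m) k)
    (hspan : ∀ j : ℤ, Finsupp.single j (1 : ℂ) ∈ Submodule.span ℂ (Set.range y)) :
    ∃ (ε : ℤ) (α : ℂ), (ε = 1 ∨ ε = -1) ∧ α ≠ 0 ∧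
      ∀ n : ℤ, y n = Finsupp.single (ε * n) ((ε : ℂ) * α ^ n) := by
  have heig : ∀ n k : ℤ, ((y 0).sum fun i c => c * y n (k - i) * ((k : ℂ) - i - i))
      = (n : ℂ) * y n k := by
    intro n k
    have := hbr 0 n k
    simpa using this
  set x := y 0 with hx
  have hxne : x.support.Nonempty := Finsupp.support_nonempty_iff.mpr (hne 0)
  set M := x.support.max' hxne with hM
  set m := x.support.min' hxne with hm
  have hMmem : M ∈ x.support := Finset.max'_mem _ _
  have hmmem : m ∈ x.support := Finset.min'_mem _ _
  have hxM : x M ≠ 0 := Finsupp.mem_support_iff.mp hMmem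
  have hxm : x m ≠ 0 := Finsupp.mem_support_iff.mp hmmem
  have hmM : m ≤ M := Finset.min'_le _ _ hMmem
  -- T1 : if M > 0 then every y n (n ≠ 0) has max of support M
  have T1 : 0 < M → ∀ n : ℤ, n ≠ 0 →
      (y n).support.max' (Finsupp.support_nonempty_iff.mpr (hne n)) = M := by
    intro hMpos n hn
    set N := (y n).support.max' (Finsupp.support_nonempty_iff.mpr (hne n)) with hN
    have hNmem : N ∈ (y n).support := Finset.max'_mem _ _
    have hyN : y n N ≠ 0 := Finsupp.mem_support_iff.mp hNmem
    have h0 : y n (M + N) = 0 := by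
      apply Finsupp.notMem_support_iff.mp
      intro hmem
      have := Finset.le_max' _ _ hmem
      omega
    have he := heig n (M + N)
    rw [Finsupp.sum, Finset.sum_eq_single M] at he
    · rw [show (M + N - M : ℤ) = N by ring, h0, mul_zero] at he
      have key : ((N : ℂ) - M) = 0 := by
        have := mul_eq_zero.mp he
        rcases this with h | h
        · rcases mul_eq_zero.mp h with h' | h'
          · exact absurd h' hxM
          · exact absurd h' hyN
        · push_cast at h ⊢
          linear_combination h
      have : (N : ℂ) = (M : ℂ) := by linear_combination key
      exact Int.cast_injective this
    · intro i hi hiM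
      have hile : i ≤ M := Finset.le_max' _ _ hi
      have : y n (M + N - i) = 0 := by
        apply Finsupp.notMem_support_iff.mp
        intro hmem
        have := Finset.le_max' _ _ hmem
        omega
      rw [this]
      ring
    · intro hnot
      exact absurd hMmem hnot
  -- T1' : if m < 0 then every y n (n ≠ 0) has min of support m
  have T1' : m < 0 → ∀ n : ℤ, n ≠ 0 →
      (y n).support.min' (Finsupp.support_nonempty_iff.mpr (hne n)) = m := by
    intro hmneg n hn
    set N := (y n).support.min' (Finsupp.support_nonempty_iff.mpr (hne n)) with hN
    have hNmem : N ∈ (y n).support := Finset.min'_mem _ _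
    have hyN : y n N ≠ 0 := Finsupp.mem_support_iff.mp hNmem
    have h0 : y n (m + N) = 0 := by
      apply Finsupp.notMem_support_iff.mp
      intro hmem
      have := Finset.min'_le _ _ hmem
      omega
    have he := heig n (m + N)
    rw [Finsupp.sum, Finset.sum_eq_single m] at he
    · rw [show (m + N - m : ℤ) = N by ring, h0, mul_zero] at he
      have key : ((N : ℂ) - m) = 0 := by
        rcases mul_eq_zero.mp he with h | h
        · rcases mul_eq_zero.mp h with h' | h'
          · exact absurd h' hxm
          · exact absurd h' hyN
        · push_cast at h ⊢
          linear_combination h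
      have : (N : ℂ) = (m : ℂ) := by linear_combination key
      exact (Int.cast_injective this).symm ▸ rfl
    · intro i hi him
      have hile : m ≤ i := Finset.min'_le _ _ hi
      have : y n (m + N - i) = 0 := by
        apply Finsupp.notMem_support_iff.mp
        intro hmem
        have := Finset.min'_le _ _ hmem
        omega
      rw [this]
      ring
    · intro hnot
      exact absurd hmmem hnot
  -- T2 : if m ≥ 0 then n = x 0 * min supp (y n)
  have T2 : 0 ≤ m → ∀ n : ℤ, n ≠ 0 →
      (n : ℂ) = x 0 * ((y n).support.min' (Finsupp.support_nonempty_iff.mpr (hne n))) := by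
    intro hmpos n hn
    set N := (y n).support.min' (Finsupp.support_nonempty_iff.mpr (hne n)) with hN
    have hNmem : N ∈ (y n).support := Finset.min'_mem _ _
    have hyN : y n N ≠ 0 := Finsupp.mem_support_iff.mp hNmem
    have he := heig n N
    rw [Finsupp.sum, Finset.sum_eq_single 0] at he
    · rw [show (N - 0 : ℤ) = N by ring] at he
      have : (x 0 * (N : ℂ) - n) * y n N = 0 := by
        push_cast at he ⊢
        linear_combination he
      rcases mul_eq_zero.mp this with h | h
      · linear_combination -h
      · exact absurd h hyN
    · intro i hi hi0
      have hile : m ≤ i := Finset.min'_le _ _ hi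
      have : y n (N - i) = 0 := by
        apply Finsupp.notMem_support_iff.mp
        intro hmem
        have := Finset.min'_le _ _ hmem
        omega
      rw [this]
      ring
    · intro hnot
      rw [Finsupp.notMem_support_iff.mp hnot]
      ring
  -- T2' : if M ≤ 0 then n = x 0 * max supp (y n)
  have T2' : M ≤ 0 → ∀ n : ℤ, n ≠ 0 →
      (n : ℂ) = x 0 * ((y n).support.max' (Finsupp.support_nonempty_iff.mpr (hne n))) := by
    intro hMneg n hn
    set N := (y n).support.max' (Finsupp.support_nonempty_iff.mpr (hne n)) with hN
    have hNmem : N ∈ (y n).support := Finset.max'_mem _ _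
    have hyN : y n N ≠ 0 := Finsupp.mem_support_iff.mp hNmem
    have he := heig n N
    rw [Finsupp.sum, Finset.sum_eq_single 0] at he
    · rw [show (N - 0 : ℤ) = N by ring] at he
      have : (x 0 * (N : ℂ) - n) * y n N = 0 := by
        push_cast at he ⊢
        linear_combination he
      rcases mul_eq_zero.mp this with h | h
      · linear_combination -h
      · exact absurd h hyN
    · intro i hi hi0
      have hile : i ≤ M := Finset.le_max' _ _ hi
      have : y n (N - i) = 0 := by
        apply Finsupp.notMem_support_iff.mp
        intro hmem
        have := Finset.le_max' _ _ hmem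
        omega
      rw [this]
      ring
    · intro hnot
      rw [Finsupp.notMem_support_iff.mp hnot]
      ring
  -- M cannot be positive
  have hMnp : ¬ 0 < M := by
    intro hMpos
    by_cases hm0 : 0 ≤ m
    · set d := (y 1).support.min' (Finsupp.support_nonempty_iff.mpr (hne 1)) with hd
      have h1 : (1 : ℂ) = x 0 * d := by simpa using T2 hm0 1 one_ne_zero
      have hx0 : x 0 ≠ 0 := by
        intro h
        rw [h, zero_mul] at h1
        exact one_ne_zero h1
      have hd0 : d ≠ 0 := by
        intro h
        rw [h] at h1
        simp at h1
      set n := d * (|M| + 1) with hn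
      have habs : 0 ≤ |M| := abs_nonneg M
      have hnne : n ≠ 0 := by
        apply mul_ne_zero hd0
        omega
      have h2 := T2 hm0 n hnne
      set N := (y n).support.min' (Finsupp.support_nonempty_iff.mpr (hne n)) with hN
      have hmax := T1 hMpos n hnne
      have hNle : N ≤ M := by
        rw [← hmax]
        exact Finset.min'_le _ _ (Finset.max'_mem _ _)
      have hcast : (N : ℂ) = ((n * d : ℤ) : ℂ) := by
        push_cast
        calc (N : ℂ) = (x 0 * d) * N := by rw [← h1]; ring
          _ = (x 0 * N) * d := by ring
          _ = (n : ℂ) * d := by rw [← h2]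
      have hNnd : N = n * d := Int.cast_injective hcast
      have hdd : (1 : ℤ) ≤ d * d := mul_self_pos.mpr hd0
      have heq : n * d = d * d * (|M| + 1) := by rw [hn]; ring
      have hlt : M < n * d := by nlinarith [le_abs_self M]
      omega
    · push_neg at hm0
      have hker : ∀ n : ℤ, y n (M + 1) = 0 := by
        intro n
        by_cases hn : n = 0
        · subst hn
          apply Finsupp.notMem_support_iff.mp
          intro hmem
          have hle : M + 1 ≤ x.support.max' hxne := Finset.le_max' x.support (M + 1) hmem
          omega
        · have hmax := T1 hMpos n hn
          apply Finsupp.notMem_support_iff.mp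
          intro hmem
          have h := Finset.le_max' _ _ hmem
          rw [hmax] at h
          omega
      have hsub : Submodule.span ℂ (Set.range y)
          ≤ LinearMap.ker (Finsupp.lapply (M + 1) : (ℤ →₀ ℂ) →ₗ[ℂ] ℂ) := by
        rw [Submodule.span_le]
        rintro f ⟨n, rfl⟩
        simp [LinearMap.mem_ker, Finsupp.lapply_apply, hker n]
      have hmem := hsub (hspan (M + 1))
      rw [LinearMap.mem_ker, Finsupp.lapply_apply, Finsupp.single_eq_same] at hmem
      exact one_ne_zero hmem
  -- m cannot be negative
  have hmnn : ¬ m < 0 := by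
    intro hmneg
    have hMle : M ≤ 0 := not_lt.mp hMnp
    set d := (y 1).support.max' (Finsupp.support_nonempty_iff.mpr (hne 1)) with hd
    have h1 : (1 : ℂ) = x 0 * d := by simpa using T2' hMle 1 one_ne_zero
    have hx0 : x 0 ≠ 0 := by
      intro h
      rw [h, zero_mul] at h1
      exact one_ne_zero h1
    have hd0 : d ≠ 0 := by
      intro h
      rw [h] at h1
      simp at h1
    set n := -(d * (|m| + 1)) with hn
    have habs : 0 ≤ |m| := abs_nonneg m
    have hnne : n ≠ 0 := by
      simp only [hn, neg_ne_zero]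
      apply mul_ne_zero hd0
      omega
    have h2 := T2' hMle n hnne
    set N := (y n).support.max' (Finsupp.support_nonempty_iff.mpr (hne n)) with hN
    have hmin := T1' hmneg n hnne
    have hNge : m ≤ N := by
      rw [← hmin]
      exact Finset.le_max' _ _ (Finset.min'_mem _ _)
    have hcast : (N : ℂ) = ((n * d : ℤ) : ℂ) := by
      push_cast
      calc (N : ℂ) = (x 0 * d) * N := by rw [← h1]; ring
        _ = (x 0 * N) * d := by ring
        _ = (n : ℂ) * d := by rw [← h2]
    have hNnd : N = n * d := Int.cast_injective hcast
    have hdd : (1 : ℤ) ≤ d * d := mul_self_pos.mpr hd0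
    have heq : n * d = -(d * d * (|m| + 1)) := by rw [hn]; ring
    have hlt : n * d < m := by nlinarith [neg_abs_le m]
    omega
  have hMle : M ≤ 0 := not_lt.mp hMnp
  have hmge : 0 ≤ m := not_lt.mp hmnn
  have hM0 : M = 0 := le_antisymm hMle (le_trans hmge hmM)
  have hm0 : m = 0 := le_antisymm (hmM.trans hMle) hmge
  -- x is supported at 0 only
  have hsupp0 : x.support = {0} := by
    apply Finset.eq_singleton_iff_unique_mem.mpr
    refine ⟨hM0 ▸ hMmem, ?_⟩
    intro i hi
    have h1 := Finset.le_max' _ _ hi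
    have h2 := Finset.min'_le _ _ hi
    omega
  obtain ⟨ha, hxa⟩ := Finsupp.support_eq_singleton.mp hsupp0
  have heig2 : ∀ n k : ℤ, (x 0 * k - n) * y n k = 0 := by
    intro n k
    have h := heig n k
    rw [hxa, Finsupp.sum_single_index (by ring), show (k - 0 : ℤ) = k by ring] at h
    push_cast at h ⊢
    linear_combination h
  obtain ⟨k₁, hk₁mem⟩ := Finsupp.support_nonempty_iff.mpr (hne 1)
  have hk₁ : y 1 k₁ ≠ 0 := Finsupp.mem_support_iff.mp hk₁mem
  set d := k₁ with hdd
  have had : x 0 * (d : ℂ) = 1 := by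
    have h := heig2 1 d
    rcases mul_eq_zero.mp h with h' | h'
    · push_cast at h' ⊢
      linear_combination h'
    · exact absurd h' hk₁
  have hd0 : d ≠ 0 := by
    intro h
    rw [h] at had
    simp at had
  have hsy : ∀ n k : ℤ, y n k ≠ 0 → k = n * d := by
    intro n k hk
    have h := heig2 n k
    have h' : x 0 * (k : ℂ) = n := by
      rcases mul_eq_zero.mp h with h' | h'
      · linear_combination h'
      · exact absurd h' hk
    have : (k : ℂ) = ((n * d : ℤ) : ℂ) := by
      push_cast
      calc (k : ℂ) = (x 0 * d) * k := by rw [had]; ring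
        _ = (x 0 * k) * d := by ring
        _ = (n : ℂ) * d := by rw [h']
    exact Int.cast_injective this
  have hysingle : ∀ n : ℤ, y n = Finsupp.single (n * d) (y n (n * d)) := by
    intro n
    refine Finsupp.eq_single_iff.mpr ⟨?_, rfl⟩
    intro k hk
    rw [Finset.mem_singleton]
    exact hsy n k (Finsupp.mem_support_iff.mp hk)
  have hcne : ∀ n : ℤ, y n (n * d) ≠ 0 := by
    intro n h
    apply hne n
    rw [hysingle n, h, Finsupp.single_zero]
  have hdunit : d = 1 ∨ d = -1 := by
    by_contra hd
    have hker : ∀ n : ℤ, y n 1 = 0 := by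
      intro n
      by_contra h
      have h1 := hsy n 1 h
      exact hd (Int.isUnit_iff.mp (IsUnit.of_mul_eq_one (a := d) n
        (by rw [mul_comm]; omega)))
    have hsub : Submodule.span ℂ (Set.range y)
        ≤ LinearMap.ker (Finsupp.lapply (1 : ℤ) : (ℤ →₀ ℂ) →ₗ[ℂ] ℂ) := by
      rw [Submodule.span_le]
      rintro f ⟨n, rfl⟩
      simp [LinearMap.mem_ker, Finsupp.lapply_apply, hker n]
    have hmem := hsub (hspan 1)
    rw [LinearMap.mem_ker, Finsupp.lapply_apply, Finsupp.single_eq_same] at hmem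
    exact one_ne_zero hmem
  have hd2 : (d : ℂ) * (d : ℂ) = 1 := by rcases hdunit with h | h <;> norm_num [h]
  set c : ℤ → ℂ := fun n => y n (n * d) with hc
  have hmul : ∀ n m : ℤ, n ≠ m → (d : ℂ) * c n * c m = c (n + m) := by
    intro n m hnm
    have hb := hbr n m ((n + m) * d)
    rw [hysingle n, Finsupp.sum_single_index (by ring),
      show ((n + m) * d - n * d : ℤ) = m * d by ring] at hb
    have hmn : ((m : ℂ) - n) ≠ 0 := by
      intro h
      apply hnm
      have : (n : ℂ) = m := by linear_combination -h
      exact Int.cast_injective this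
    have hcancel : ((m : ℂ) - n) * ((d : ℂ) * c n * c m - c (n + m)) = 0 := by
      push_cast at hb ⊢
      linear_combination hb
    have := (mul_eq_zero.mp hcancel).resolve_left hmn
    linear_combination this
  set β : ℤ → ℂ := fun n => (d : ℂ) * c n with hβ
  have hβmul : ∀ n m : ℤ, n ≠ m → β (n + m) = β n * β m := by
    intro n m hnm
    show (d : ℂ) * c (n + m) = ((d : ℂ) * c n) * ((d : ℂ) * c m)
    rw [← hmul n m hnm]
    linear_combination ((d:ℂ) * c n * c m) * hd2 - ((d:ℂ) * c n * c m) * hd2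
  have hβne : ∀ n : ℤ, β n ≠ 0 := by
    intro n
    exact mul_ne_zero (by exact_mod_cast fun h => hd0 (by exact_mod_cast h)) (hcne n)
  have hβ0 : β 0 = 1 := by
    show (d : ℂ) * c 0 = 1
    have : c 0 = x 0 := by
      show y 0 (0 * d) = x 0
      rw [zero_mul]
    rw [this, mul_comm]
    exact had
  set α := β 1 with hα
  have hαne : α ≠ 0 := hβne 1
  have hβneg1 : β (-1) = α⁻¹ := by
    have h := hβmul 1 (-1) (by norm_num)
    rw [show (1 + -1 : ℤ) = 0 by norm_num, hβ0] at h
    field_simp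
    linear_combination -h
  have hb3 : β 3 = α * β 2 := by
    have h := hβmul 1 2 (by norm_num)
    rw [show (1 + 2 : ℤ) = 3 by norm_num] at h
    exact h
  have hb4 : β 4 = α * β 3 := by
    have h := hβmul 1 3 (by norm_num)
    rw [show (1 + 3 : ℤ) = 4 by norm_num] at h
    exact h
  have h24 : β 2 = β 4 * β (-2) := by
    have h := hβmul 4 (-2) (by norm_num)
    rw [show (4 + -2 : ℤ) = 2 by norm_num] at h
    exact h
  have h2neg2 : (1 : ℂ) = β 2 * β (-2) := by
    have h := hβmul 2 (-2) (by norm_num)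
    rw [show (2 + -2 : ℤ) = 0 by norm_num, hβ0] at h
    exact h
  have hβ2 : β 2 = α * α := by
    have e1 : β 2 = α * α * (β 2 * β (-2)) := by
      calc β 2 = β 4 * β (-2) := h24
        _ = α * β 3 * β (-2) := by rw [hb4]
        _ = α * (α * β 2) * β (-2) := by rw [hb3]
        _ = α * α * (β 2 * β (-2)) := by ring
    rw [e1, ← h2neg2, mul_one]
  have hβneg2 : β (-2) = (α * α)⁻¹ := by
    have hαα : α * α ≠ 0 := mul_ne_zero hαne hαne
    field_simp
    linear_combination -h2neg2 - β (-2) * hβ2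
  have hαpow : ∀ n : ℤ, β n = α ^ n := by
    intro n
    induction n using Int.induction_on with
    | zero => rw [hβ0, zpow_zero]
    | succ k ih =>
      by_cases hk : (k : ℤ) = 1
      · rw [hk, show ((1 : ℤ) + 1) = 2 by norm_num, hβ2,
          show ((2 : ℤ)) = 1 + 1 by norm_num, zpow_add₀ hαne, zpow_one]
      · have h := hβmul k 1 hk
        rw [h, ih, hα, zpow_add₀ hαne, zpow_one]
    | pred k ih =>
      by_cases hk : (-k : ℤ) = -1
      · rw [show (-(k : ℤ) - 1) = -2 by omega, hβneg2,
          show ((-2 : ℤ)) = -1 + -1 by norm_num, zpow_add₀ hαne]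
        rw [zpow_neg, zpow_one]
        field_simp
      · have h := hβmul (-k) (-1) (by omega)
        rw [show (-(k : ℤ) + -1) = -k - 1 by ring] at h
        rw [h, ih, hβneg1, zpow_sub_one₀ hαne]
  refine ⟨d, α, hdunit, hαne, ?_⟩
  intro n
  rw [hysingle n]
  have hval : y n (n * d) = (d : ℂ) * α ^ n := by
    have : (d : ℂ) * β n = c n := by
      show (d : ℂ) * ((d : ℂ) * c n) = c n
      rw [← mul_assoc, hd2, one_mul]
    rw [← hαpow n, this]
  rw [hval, mul_comm n d]


/-- every Lie algebra automorphism `σ` of `W_X(λ)` preserves the abelian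
ideal spanned by the `X_n`, and after composing with a suitable inner automorphism `ρ` (a
finite product of maps `exp(ad_w) = id + ad_w` with `w` in the span of the `X_n`) it takes
the normal form `(ρ ∘ σ)(L_n) = ε αⁿ L_{εn} + γ_n X_{εn}`, `(ρ ∘ σ)(X_n) = ξ_n X_{εn}`,
with `γ_0 = 0` in the case `X = A`. -/
theorem stmt_15 (lam : Option ℂ) (L : Type) [LieRing L] [LieAlgebra ℂ L]
    (b : Module.Basis (ℤ ⊕ ℤ) ℂ L) (ω : ℤ → ℤ → ℂ)
    (hω : (∀ n m : ℤ, ω n m = omegaA lam n m) ∨ (∀ n m : ℤ, ω n m = omegaB lam n m))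
    (hLL : ∀ n m : ℤ,
      ⁅b (Sum.inl n), b (Sum.inl m)⁆ = ((m : ℂ) - (n : ℂ)) • b (Sum.inl (n + m)))
    (hLX : ∀ n m : ℤ, ⁅b (Sum.inl n), b (Sum.inr m)⁆ = ω n m • b (Sum.inr (n + m)))
    (hXX : ∀ n m : ℤ, ⁅b (Sum.inr n), b (Sum.inr m)⁆ = 0)
    (σ : L ≃ₗ⁅ℂ⁆ L) :
    (∀ x ∈ Submodule.span ℂ (Set.range fun n : ℤ => b (Sum.inr n)),
      σ x ∈ Submodule.span ℂ (Set.range fun n : ℤ => b (Sum.inr n))) ∧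
    ∃ (ρ : Module.End ℂ L) (ws : List L) (ε : ℤ) (α : ℂ) (γ : ℤ → ℂ) (ξ : ℤ → ℂ),
      (∀ w ∈ ws, w ∈ Submodule.span ℂ (Set.range fun n : ℤ => b (Sum.inr n))) ∧
      ρ = (ws.map fun w => (1 : Module.End ℂ L) + LieAlgebra.ad ℂ L w).prod ∧
      (ε = 1 ∨ ε = -1) ∧ α ≠ 0 ∧ (∀ n : ℤ, ξ n ≠ 0) ∧
      (∀ n : ℤ, ρ (σ (b (Sum.inl n))) =
        ((ε : ℂ) * α ^ n) • b (Sum.inl (ε * n)) + γ n • b (Sum.inr (ε * n))) ∧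
      (∀ n : ℤ, ρ (σ (b (Sum.inr n))) = ξ n • b (Sum.inr (ε * n))) ∧
      ((∀ n m : ℤ, ω n m = omegaA lam n m) → γ 0 = 0) := by
  classical
  have hpres : ∀ x ∈ Submodule.span ℂ (Set.range fun n : ℤ => b (Sum.inr n)),
      σ x ∈ Submodule.span ℂ (Set.range fun n : ℤ => b (Sum.inr n)) := by
    intro x hx
    rw [mem_span_iff_PL] at hx ⊢
    exact sigma_preserves b ω hLL hLX hXX σ x hx
  refine ⟨hpres, ?_⟩
  set y : ℤ → (ℤ →₀ ℂ) := fun n => PL b (σ (b (Sum.inl n))) with hy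
  have hXI : ∀ n : ℤ, PL b (σ (b (Sum.inr n))) = 0 := fun n =>
    sigma_preserves b ω hLL hLX hXX σ (b (Sum.inr n)) (PL_X b n)
  have hyne : ∀ n : ℤ, y n ≠ 0 := by
    intro n h
    have h1 : PL b (σ.symm (σ (b (Sum.inl n)))) = 0 :=
      sigma_preserves b ω hLL hLX hXX σ.symm _ h
    rw [σ.symm_apply_apply, PL_L] at h1
    have := DFunLike.congr_fun h1 n
    rw [Finsupp.single_eq_same] at this
    exact one_ne_zero this
  have hybr : ∀ n m k : ℤ, ((y n).sum fun i c => c * y m (k - i) * ((k : ℂ) - i - i))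
      = ((m : ℂ) - n) * y (n + m) k := by
    intro n m k
    calc ((y n).sum fun i c => c * y m (k - i) * ((k : ℂ) - i - i))
        = PL b ⁅σ (b (Sum.inl n)), σ (b (Sum.inl m))⁆ k :=
          (coeffL b ω hLL hLX hXX _ _ k).symm
      _ = PL b (σ ⁅b (Sum.inl n), b (Sum.inl m)⁆) k := by rw [LieEquiv.map_lie]
      _ = PL b (σ (((m : ℂ) - n) • b (Sum.inl (n + m)))) k := by rw [hLL]
      _ = ((m : ℂ) - n) * y (n + m) k := by
          have hs : σ (((m : ℂ) - n) • b (Sum.inl (n + m)))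
              = ((m : ℂ) - n) • σ (b (Sum.inl (n + m))) := map_smul σ.toLinearEquiv _ _
          rw [hs, map_smul, Finsupp.smul_apply, smul_eq_mul]
  have hspan : ∀ j : ℤ, Finsupp.single j (1 : ℂ) ∈ Submodule.span ℂ (Set.range y) := by
    intro j
    have htop : ∀ v : L, PL b (σ v) ∈ Submodule.span ℂ (Set.range y) := by
      intro v
      have hv : v ∈ (⊤ : Submodule ℂ L) := trivial
      rw [← b.span_eq] at hv
      have hle : Submodule.span ℂ (Set.range ⇑b) ≤ Submodule.comap
          ((PL b).comp (σ.toLinearEquiv.toLinearMap))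
          (Submodule.span ℂ (Set.range y)) := by
        rw [Submodule.span_le]
        rintro u ⟨i, rfl⟩
        simp only [SetLike.mem_coe, Submodule.mem_comap, LinearMap.comp_apply,
          LinearEquiv.coe_coe]
        cases i with
        | inl n => exact Submodule.subset_span ⟨n, rfl⟩
        | inr n =>
          show PL b (σ (b (Sum.inr n))) ∈ _
          rw [hXI n]
          exact Submodule.zero_mem _
      exact hle hv
    have := htop (σ.symm (b (Sum.inl j)))
    rw [σ.apply_symm_apply, PL_L] at this
    exact this
  obtain ⟨ε, α, hεu, hαne, hyform⟩ := witt_core y hyne hybr hspan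
  -- derived facts about ε
  have hσL : ∀ n : ℤ, PL b (σ (b (Sum.inl n))) = Finsupp.single (ε * n) ((ε : ℂ) * α ^ n) :=
    fun n => hyform n
  have hε2 : ε * ε = 1 := by rcases hεu with h | h <;> simp [h]
  have hεC : ((ε : ℤ) : ℂ) ≠ 0 := by rcases hεu with h | h <;> norm_num [h]
  have hεC2 : ((ε : ℤ) : ℂ) * ((ε : ℤ) : ℂ) = 1 := by rcases hεu with h | h <;> norm_num [h]
  have hω0 : ∀ k : ℤ, ω 0 k = k := by
    intro k
    rcases hω with h | h
    · rw [h]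
      unfold omegaA
      rw [lamTerm_zero]
      simp
    · rw [h]
      unfold omegaB
      rw [lamTerm_zero]
      simp
  have hP0 : PL b (σ (b (Sum.inl 0))) = Finsupp.single 0 ((ε : ℤ) : ℂ) := by
    have h := hσL 0
    rwa [mul_zero, zpow_zero, mul_one] at h
  -- the action on the X part
  have hσX : ∀ m : ℤ, ∃ ξm : ℂ, ξm ≠ 0 ∧ σ (b (Sum.inr m)) = ξm • b (Sum.inr (ε * m)) := by
    intro m
    have hrel : ⁅σ (b (Sum.inl 0)), σ (b (Sum.inr m))⁆ = (m : ℂ) • σ (b (Sum.inr m)) := by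
      rw [← LieEquiv.map_lie, hLX, hω0, zero_add]
      exact map_smul σ.toLinearEquiv _ _
    have hQ : ∀ k : ℤ, k ≠ ε * m → QL b (σ (b (Sum.inr m))) k = 0 := by
      intro k hk
      have hc := coeffX_single b ω hLL hLX hXX (σ (b (Sum.inl 0))) (σ (b (Sum.inr m)))
        k 0 0 ((ε : ℤ) : ℂ) 0 hP0 (by rw [hXI m, Finsupp.single_zero])
      rw [hrel, map_smul, Finsupp.smul_apply, smul_eq_mul,
        show (k - 0 : ℤ) = k by ring, hω0] at hc
      have hεkm : ((ε : ℤ) : ℂ) * k - m ≠ 0 := by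
        intro hh
        apply hk
        have hcast : ((ε * k : ℤ) : ℂ) = ((m : ℤ) : ℂ) := by push_cast; linear_combination hh
        have h2 := Int.cast_injective hcast
        calc k = ε * ε * k := by rw [hε2, one_mul]
          _ = ε * (ε * k) := by ring
          _ = ε * m := by rw [h2]
      have hzz : QL b (σ (b (Sum.inr m))) k * (((ε : ℤ) : ℂ) * k - m) = 0 := by
        linear_combination -hc
      exact (mul_eq_zero.mp hzz).resolve_right hεkm
    refine ⟨QL b (σ (b (Sum.inr m))) (ε * m), ?_, ?_⟩
    · intro h0
      have heq : σ (b (Sum.inr m)) = 0 := by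
        apply eq_zero_of_PQ b _ (hXI m)
        ext k
        by_cases hk : k = ε * m
        · rw [hk, h0]
          rfl
        · rw [hQ k hk]
          rfl
      have hbm : b (Sum.inr m) = σ.symm 0 := by
        rw [← heq, σ.symm_apply_apply]
      rw [show σ.symm (0 : L) = 0 from σ.symm.toLieHom.map_zero] at hbm
      exact b.ne_zero (Sum.inr m) hbm
    · apply reconX b _ (ε * m) _ (hXI m)
      ext k
      by_cases hk : k = ε * m
      · subst hk
        rw [Finsupp.single_eq_same]
      · rw [hQ k hk, Finsupp.single_apply, if_neg (fun hh => hk hh.symm)]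
  -- the correcting inner automorphism
  set q0 : ℤ →₀ ℂ := QL b (σ (b (Sum.inl 0))) with hq0
  set w : L := ∑ j ∈ q0.support.erase 0, (((ε : ℤ) : ℂ) * q0 j / j) • b (Sum.inr j) with hw
  have hwP : PL b w = 0 := by
    rw [hw, map_sum]
    apply Finset.sum_eq_zero
    intro j _
    rw [map_smul, PL_X, smul_zero]
  have hwI : w ∈ Submodule.span ℂ (Set.range fun n : ℤ => b (Sum.inr n)) := by
    rw [hw]
    apply Submodule.sum_mem
    intro j _
    exact Submodule.smul_mem _ _ (Submodule.subset_span ⟨j, rfl⟩)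
  have hwQ : ∀ k : ℤ, k ≠ 0 → QL b w k = ((ε : ℤ) : ℂ) * q0 k / k := by
    intro k hk
    rw [hw, map_sum, Finsupp.finset_sum_apply, Finset.sum_eq_single k]
    · rw [map_smul, QL_X, Finsupp.smul_apply, Finsupp.single_eq_same, smul_eq_mul, mul_one]
    · intro j _ hjk
      rw [map_smul, QL_X, Finsupp.smul_apply, Finsupp.single_apply, if_neg hjk, smul_zero]
    · intro hnk
      rw [map_smul, QL_X, Finsupp.smul_apply, Finsupp.single_eq_same, smul_eq_mul, mul_one]
      have hq0k : q0 k = 0 := by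
        by_contra hne0
        exact hnk (Finset.mem_erase.mpr ⟨hk, Finsupp.mem_support_iff.mpr hne0⟩)
      rw [hq0k]
      ring
  have hwQ0 : QL b w 0 = 0 := by
    rw [hw, map_sum, Finsupp.finset_sum_apply]
    apply Finset.sum_eq_zero
    intro j hj
    have hj0 : j ≠ 0 := (Finset.mem_erase.mp hj).1
    rw [map_smul, QL_X, Finsupp.smul_apply, Finsupp.single_apply, if_neg hj0, smul_zero]
  set ρ : Module.End ℂ L := 1 + LieAlgebra.ad ℂ L w with hρ
  have happ : ∀ v : L, ρ v = v + ⁅w, v⁆ := by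
    intro v
    rw [hρ, LinearMap.add_apply, Module.End.one_apply, LieAlgebra.ad_apply]
  have hPρ : ∀ v : L, PL b (ρ v) = PL b v := by
    intro v
    rw [happ, map_add, lie_PL_zero b ω hLL hLX hXX w v hwP, add_zero]
  have hρX : ∀ m : ℤ, ρ (σ (b (Sum.inr m))) = σ (b (Sum.inr m)) := by
    intro m
    rw [happ, lie_I_I b ω hLL hLX hXX w _ hwP (hXI m), add_zero]
  have hQρ0 : QL b (ρ (σ (b (Sum.inl 0)))) = Finsupp.single 0 (q0 0) := by
    ext k
    have hbr0 : QL b ⁅w, σ (b (Sum.inl 0))⁆ k = -(((ε : ℤ) : ℂ) * QL b w k * k) := by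
      rw [coeffX b ω hLL hLX hXX, hwP, Finsupp.sum_zero_index, hP0,
        Finsupp.sum_single_index (by ring), show (k - 0 : ℤ) = k by ring, hω0]
      ring
    rw [happ, map_add, Finsupp.add_apply, hbr0]
    by_cases hk : k = 0
    · subst hk
      rw [hwQ0, Finsupp.single_eq_same]
      ring
    · rw [hwQ k hk, Finsupp.single_apply, if_neg (fun hh => hk hh.symm)]
      have hkC : (k : ℂ) ≠ 0 := Int.cast_ne_zero.mpr hk
      have hdiv : ((ε : ℤ) : ℂ) * (((ε : ℤ) : ℂ) * q0 k / (k : ℂ)) * (k : ℂ) = q0 k := by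
        field_simp
        linear_combination q0 k * hεC2
      show q0 k + -(((ε : ℤ) : ℂ) * (((ε : ℤ) : ℂ) * q0 k / (k : ℂ)) * (k : ℂ)) = 0
      rw [hdiv]
      ring
  have hPρ0 : PL b (ρ (σ (b (Sum.inl 0)))) = Finsupp.single 0 ((ε : ℤ) : ℂ) := by
    rw [hPρ, hP0]
  have hρlie : ∀ u v : L, ρ ⁅u, v⁆ = ⁅ρ u, ρ v⁆ := by
    intro u v
    rw [happ, happ, happ, lie_add, add_lie, add_lie]
    rw [lie_I_I b ω hLL hLX hXX ⁅w, u⁆ ⁅w, v⁆ (lie_PL_zero b ω hLL hLX hXX w u hwP)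
      (lie_PL_zero b ω hLL hLX hXX w v hwP)]
    rw [leibniz_lie]
    abel
  have hrelτ : ∀ n : ℤ, ⁅ρ (σ (b (Sum.inl 0))), ρ (σ (b (Sum.inl n)))⁆
      = (n : ℂ) • ρ (σ (b (Sum.inl n))) := by
    intro n
    have e : ⁅b (Sum.inl 0), b (Sum.inl n)⁆ = (n : ℂ) • b (Sum.inl n) := by
      rw [hLL]
      norm_num
    rw [← hρlie, ← LieEquiv.map_lie, e]
    have hs : σ ((n : ℂ) • b (Sum.inl n)) = (n : ℂ) • σ (b (Sum.inl n)) :=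
      map_smul σ.toLinearEquiv _ _
    rw [hs, map_smul]
  -- coefficient analysis for ρ σ L_n
  have hQn : ∀ n k : ℤ, ((n : ℂ) - ((ε : ℤ) : ℂ) * k) * QL b (ρ (σ (b (Sum.inl n)))) k
      = -(((ε : ℤ) : ℂ) * α ^ n * (Finsupp.single (0 : ℤ) (q0 0) : ℤ →₀ ℂ) (k - ε * n)
          * ω (ε * n) (k - ε * n)) := by
    intro n k
    have hPρn : PL b (ρ (σ (b (Sum.inl n))))
        = Finsupp.single (ε * n) (((ε : ℤ) : ℂ) * α ^ n) := by rw [hPρ, hσL]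
    have hc := coeffX_single b ω hLL hLX hXX (ρ (σ (b (Sum.inl 0))))
      (ρ (σ (b (Sum.inl n)))) k 0 (ε * n) ((ε : ℤ) : ℂ) (((ε : ℤ) : ℂ) * α ^ n)
      hPρ0 hPρn
    rw [hrelτ n, map_smul, Finsupp.smul_apply, smul_eq_mul,
      show (k - 0 : ℤ) = k by ring, hω0, hQρ0] at hc
    linear_combination hc
  have hQρn : ∀ n : ℤ, QL b (ρ (σ (b (Sum.inl n))))
      = Finsupp.single (ε * n) (QL b (ρ (σ (b (Sum.inl n)))) (ε * n)) := by
    intro n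
    ext k
    by_cases hk : k = ε * n
    · subst hk
      rw [Finsupp.single_eq_same]
    · have h := hQn n k
      rw [Finsupp.single_apply, if_neg (show ¬(0 : ℤ) = k - ε * n by omega)] at h
      have hne' : (n : ℂ) - ((ε : ℤ) : ℂ) * k ≠ 0 := by
        intro hh
        apply hk
        have hcast : ((ε * k : ℤ) : ℂ) = ((n : ℤ) : ℂ) := by
          push_cast
          linear_combination -hh
        have h2 := Int.cast_injective hcast
        calc k = ε * ε * k := by rw [hε2, one_mul]
          _ = ε * (ε * k) := by ring
          _ = ε * n := by rw [h2]
      have h0 : ((n : ℂ) - ((ε : ℤ) : ℂ) * k) * QL b (ρ (σ (b (Sum.inl n)))) k = 0 := by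
        linear_combination h
      rw [(mul_eq_zero.mp h0).resolve_left hne', Finsupp.single_apply,
        if_neg (fun hh => hk hh.symm)]
  set γ : ℤ → ℂ := fun n => QL b (ρ (σ (b (Sum.inl n)))) (ε * n) with hγ
  have hρLn : ∀ n : ℤ, ρ (σ (b (Sum.inl n)))
      = (((ε : ℤ) : ℂ) * α ^ n) • b (Sum.inl (ε * n)) + γ n • b (Sum.inr (ε * n)) := by
    intro n
    exact recon b _ (ε * n) (ε * n) _ _ (by rw [hPρ, hσL]) (hQρn n)
  have hγ0 : γ 0 = q0 0 := by
    show QL b (ρ (σ (b (Sum.inl 0)))) (ε * 0) = q0 0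
    rw [mul_zero, hQρ0, Finsupp.single_eq_same]
  have hAcase : (∀ n m : ℤ, ω n m = omegaA lam n m) → γ 0 = 0 := by
    intro hA
    rw [hγ0]
    by_contra h0
    have hid : ∀ n : ℤ, ω (ε * n) 0 = 0 := by
      intro n
      have h := hQn n (ε * n)
      rw [show (ε * n - ε * n : ℤ) = 0 by ring, Finsupp.single_eq_same] at h
      push_cast at h
      have hz : ((ε : ℤ) : ℂ) * α ^ n * q0 0 * ω (ε * n) 0 = 0 := by
        linear_combination h + ((n : ℂ) * QL b (ρ (σ (b (Sum.inl n)))) (ε * n)) * hεC2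
      have hcoef : ((ε : ℤ) : ℂ) * α ^ n * q0 0 ≠ 0 :=
        mul_ne_zero (mul_ne_zero hεC (zpow_ne_zero n hαne)) h0
      exact (mul_eq_zero.mp hz).resolve_left hcoef
    have h1 := hid ε
    have h2 := hid (2 * ε)
    rw [hε2] at h1
    rw [show ε * (2 * ε) = 2 * (ε * ε) by ring, hε2, mul_one] at h2
    rw [hA] at h1 h2
    unfold omegaA at h1 h2
    rw [if_pos rfl] at h1 h2
    cases lam with
    | none =>
      unfold lamTerm at h1
      norm_num at h1
    | some l =>
      unfold lamTerm at h1 h2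
      norm_num at h1 h2
      have : (1 : ℂ) = 0 := by linear_combination 3 * h1 - h2
      exact one_ne_zero this
  choose ξ hξne hξeq using hσX
  refine ⟨ρ, [w], ε, α, γ, ξ, ?_, ?_, hεu, hαne, hξne, hρLn, ?_, hAcase⟩
  · intro w' hw'
    rw [List.mem_singleton] at hw'
    subst hw'
    exact hwI
  · rw [List.map_cons, List.map_nil, List.prod_singleton]
  · intro n
    rw [hρX n, hξeq n]
end

section
/- Let λ ∈ ℂ ∪ {∞}, let X denote either A or B, and let d be a derivation of W_X(λ) of degree zero, i.e., d(L_n) = α_n·L_n + β_n·X_n and d(X_n) = η_n·L_n + θ_n·X_n for all n ∈ ℤ, where α_n, β_n, η_n, θ_n ∈ ℂ. Then η_n = 0 for all n ∈ ℤ; that is, d maps the subspace spanned by {X_n : n ∈ ℤ} into itself. -/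
/-- a degree-zero derivation of `W_X(λ)` (for `X = A` or `X = B`) maps the
subspace spanned by `{X_n : n ∈ ℤ}` into itself, i.e. the coefficients `η_n` vanish. -/
theorem stmt_17 (lam : Option ℂ) (L : Type) [LieRing L] [LieAlgebra ℂ L]
    (b : Module.Basis (ℤ ⊕ ℤ) ℂ L) (ω : ℤ → ℤ → ℂ)
    (hω : (∀ n m : ℤ, ω n m = omegaA lam n m) ∨ (∀ n m : ℤ, ω n m = omegaB lam n m))
    (hLL : ∀ n m : ℤ,
      ⁅b (Sum.inl n), b (Sum.inl m)⁆ = ((m : ℂ) - (n : ℂ)) • b (Sum.inl (n + m)))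
    (hLX : ∀ n m : ℤ, ⁅b (Sum.inl n), b (Sum.inr m)⁆ = ω n m • b (Sum.inr (n + m)))
    (hXX : ∀ n m : ℤ, ⁅b (Sum.inr n), b (Sum.inr m)⁆ = 0)
    (d : L →ₗ[ℂ] L)
    (hd : ∀ x y : L, d ⁅x, y⁆ = ⁅d x, y⁆ + ⁅x, d y⁆)
    (α β η θ : ℤ → ℂ)
    (hdL : ∀ n : ℤ, d (b (Sum.inl n)) = α n • b (Sum.inl n) + β n • b (Sum.inr n))
    (hdX : ∀ n : ℤ, d (b (Sum.inr n)) = η n • b (Sum.inl n) + θ n • b (Sum.inr n)) :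
    ∀ n : ℤ, η n = 0 := by
  have key1 : ∀ n m : ℤ, η n * ω n m = η m * ω m n := by
    intro n m
    have h := hd (b (Sum.inr n)) (b (Sum.inr m))
    rw [hXX, hdX n, hdX m, add_lie, lie_add, smul_lie, smul_lie, lie_smul, lie_smul,
      hXX, hLX, ← lie_skew (b (Sum.inr n)) (b (Sum.inl m)), hLX] at h
    have h2 := congrArg (fun x => b.repr x (Sum.inr (n + m))) h
    simp only [map_zero, map_add, map_smul, map_neg, Module.Basis.repr_self, Finsupp.zero_apply,
      Finsupp.add_apply, Finsupp.smul_apply, Finsupp.neg_apply, Finsupp.single_apply,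
      smul_zero, add_zero, smul_eq_mul, add_comm m n, if_pos rfl] at h2
    simp at h2; linear_combination -h2
  have key2 : ∀ n m : ℤ, ω n m * η (n + m) = ((m : ℂ) - n) * η m := by
    intro n m
    have h := hd (b (Sum.inl n)) (b (Sum.inr m))
    rw [hLX, map_smul, hdX (n + m), hdL n, hdX m, add_lie, lie_add, smul_lie, smul_lie,
      lie_smul, lie_smul, hXX, hLL, hLX] at h
    have h2 := congrArg (fun x => b.repr x (Sum.inl (n + m))) h
    simp [Finsupp.single_apply] at h2
    linear_combination h2
  rcases hω with hA | hB
  · -- case A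
    have hA' : ∀ n m : ℤ, m ≠ 0 → ω n m = (n : ℂ) + m := by
      intro n m hm; rw [hA]; simp [omegaA, hm]
    have h2 : η 2 = 0 := by
      have h := key2 1 1
      rw [hA' 1 1 one_ne_zero] at h
      norm_num at h
      exact h
    have hne : ∀ n : ℤ, n ≠ 0 → n ≠ -2 → η n = 0 := by
      intro n hn0 hn2
      have h := key1 n 2
      rw [hA' n 2 (by norm_num), hA' 2 n hn0, h2, zero_mul] at h
      push_cast at h
      have hc : (n : ℂ) + 2 ≠ 0 := by
        intro hc
        apply hn2
        have h3 : ((n + 2 : ℤ) : ℂ) = 0 := by push_cast; linear_combination hc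
        have h4 : (n + 2 : ℤ) = 0 := by exact_mod_cast h3
        omega
      exact (mul_eq_zero.mp h).resolve_right hc
    have h1 : η 1 = 0 := hne 1 (by norm_num) (by norm_num)
    have hm2 : η (-2) = 0 := by
      have h := key1 (-2) 1
      rw [hA' (-2) 1 one_ne_zero, h1, zero_mul] at h
      push_cast at h
      have hc : ((-2 : ℤ) : ℂ) + 1 ≠ 0 := by norm_num
      push_cast at hc
      exact (mul_eq_zero.mp h).resolve_right hc
    have h0 : η 0 = 0 := by
      have h := key1 0 1
      rw [hA' 0 1 one_ne_zero, h1, zero_mul] at h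
      push_cast at h
      simpa using h
    intro n
    by_cases hn0 : n = 0
    · rw [hn0]; exact h0
    by_cases hn2 : n = -2
    · rw [hn2]; exact hm2
    exact hne n hn0 hn2
  · -- case B
    have hB' : ∀ n m : ℤ, n + m ≠ 0 → ω n m = (m : ℂ) := by
      intro n m hm; rw [hB]; simp [omegaB, hm]
    have hlin : ∀ n : ℤ, η n = (n : ℂ) * η 1 := by
      have haux : ∀ n : ℤ, n ≠ -1 → η n = (n : ℂ) * η 1 := by
        intro n hn
        have h := key1 n 1
        rw [hB' n 1 (by omega), hB' 1 n (by omega)] at h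
        linear_combination h
      intro n
      by_cases hn : n = -1
      · subst hn
        have h := key1 (-1) 2
        rw [hB' (-1) 2 (by norm_num), hB' 2 (-1) (by norm_num),
          haux 2 (by norm_num)] at h
        push_cast at h ⊢
        linear_combination h / 2
      · exact haux n hn
    have h1 : η 1 = 0 := by
      have h := key2 1 2
      rw [hB' 1 2 (by norm_num), show (1:ℤ)+2 = 3 from rfl, hlin 3, hlin 2] at h
      push_cast at h
      linear_combination h / 4
    intro n
    rw [hlin n, h1, mul_zero]
end

section
/- Let λ ∈ (ℂ ∪ {∞}) \ {0}. Define derivations d_Ab and d_λ^B of W_B(λ) by: d_Ab(L_n) = 0, d_Ab(B_n) = B_n for all n; and d_λ^B(B_n) = 0 for all n, with d_λ^B(L_n) = B_n for n ≠ 0 and d_λ^B(L_0) = (λ+1)·B_0 when λ ∈ ℂ \ {0}, while d_∞^B(L_n) = B_n for all n when λ = ∞. Then the space of derivations of W_B(λ) is the internal direct sum Der(W_B(λ)) = Inn(W_B(λ)) ⊕ ℂ·d_Ab ⊕ ℂ·d_λ^B, where Inn(W_B(λ)) denotes the space of inner derivations ad_x, x ∈ W_B(λ). Consequently, the quotient Der(W_B(λ))/Inn(W_B(λ))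 is two-dimensional. -/
namespace Stmt19

def idx : ℤ ⊕ ℤ → ℤ := Sum.elim id id

def gam (lam : Option ℂ) (n m : ℤ) : ℂ := (m : ℂ) - (if n + m = 0 then lamTerm lam n else 0)

lemma lamTerm_zero (lam : Option ℂ) : lamTerm lam 0 = 0 := by cases lam <;> simp [lamTerm]

lemma gam_self (lam : Option ℂ) (n : ℤ) : gam lam 0 n = n := by
  simp only [gam, zero_add]
  rcases eq_or_ne n 0 with h | h <;> simp [h, lamTerm_zero]

lemma gam_ne (lam : Option ℂ) {n m : ℤ} (h : n + m ≠ 0) : gam lam n m = m := by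
  simp [gam, h]

lemma gam_zero_right (lam : Option ℂ) (n : ℤ) : gam lam n 0 = 0 := by
  rcases eq_or_ne n 0 with rfl | h
  · simp [gam, lamTerm_zero]
  · simp [gam, h]

variable {L : Type} [LieRing L] [LieAlgebra ℂ L] (b : Module.Basis (ℤ ⊕ ℤ) ℂ L) (lam : Option ℂ)

/-- bracket as a linear map on the left -/
def lmul (c : L) : L →ₗ[ℂ] L where
  toFun v := ⁅c, v⁆
  map_add' x y := lie_add c x y
  map_smul' t x := lie_smul t c x

def rmul (c : L) : L →ₗ[ℂ] L where
  toFun v := ⁅v, c⁆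
  map_add' x y := add_lie x y c
  map_smul' t x := smul_lie t x c

section brackets
variable (hLL : ∀ n m : ℤ,
      ⁅b (Sum.inl n), b (Sum.inl m)⁆ = ((m : ℂ) - (n : ℂ)) • b (Sum.inl (n + m)))
    (hLB : ∀ n m : ℤ,
      ⁅b (Sum.inl n), b (Sum.inr m)⁆ =
        ((m : ℂ) - (if n + m = 0 then lamTerm lam n else 0)) • b (Sum.inr (n + m)))
    (hBB : ∀ n m : ℤ, ⁅b (Sum.inr n), b (Sum.inr m)⁆ = 0)

include hLL hLB in
lemma brkL0 : ∀ i, ⁅b (Sum.inl 0), b i⁆ = (idx i : ℂ) • b i := by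
  rintro (m | m)
  · simpa [idx] using hLL 0 m
  · have := hLB 0 m
    rcases eq_or_ne m 0 with rfl | h
    · simpa [lamTerm_zero, idx] using this
    · simpa [h, idx] using this

include hLL hLB in
lemma coord_L0 (i : ℤ ⊕ ℤ) (v : L) :
    b.repr ⁅b (Sum.inl 0), v⁆ i = idx i * b.repr v i := by
  have h : (b.coord i).comp (lmul (b (Sum.inl 0))) = (idx i : ℂ) • b.coord i := by
    apply b.ext
    intro j
    simp only [LinearMap.comp_apply, lmul, LinearMap.coe_mk, AddHom.coe_mk,
      brkL0 b lam hLL hLB j, LinearMap.smul_apply, map_smul, Module.Basis.coord_apply,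
      Module.Basis.repr_self, smul_eq_mul, Finsupp.smul_single, Finsupp.single_apply]
    rcases eq_or_ne j i with rfl | h
    · simp
    · simp [h, Ne.symm h]
  have := LinearMap.congr_fun h v
  simpa [lmul] using this

include hLL hLB in
lemma coord_rL_inl (k n : ℤ) (v : L) :
    b.repr ⁅v, b (Sum.inl n)⁆ (Sum.inl k) =
      ((n : ℂ) - ((k - n : ℤ) : ℂ)) * b.repr v (Sum.inl (k - n)) := by
  have h : (b.coord (Sum.inl k)).comp (rmul (b (Sum.inl n))) =
      ((n : ℂ) - ((k - n : ℤ) : ℂ)) • b.coord (Sum.inl (k - n)) := by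
    apply b.ext
    rintro (m | m)
    · have : ⁅b (Sum.inl m), b (Sum.inl n)⁆ = ((n : ℂ) - (m : ℂ)) • b (Sum.inl (m + n)) := hLL m n
      simp only [LinearMap.comp_apply, rmul, LinearMap.coe_mk, AddHom.coe_mk, this,
        LinearMap.smul_apply, map_smul, Module.Basis.coord_apply, Module.Basis.repr_self, smul_eq_mul,
        Finsupp.single_apply]
      rcases eq_or_ne (m + n) k with rfl | h
      · simp [show m + n - n = m from by ring]
      · have h2 : ¬ (Sum.inl (m + n) : ℤ ⊕ ℤ) = Sum.inl k := by simpa using h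
        have h3 : ¬ (Sum.inl m : ℤ ⊕ ℤ) = Sum.inl (k - n) := by
          simp only [Sum.inl.injEq]; omega
        simp [h2, h3]
    · have h1 : ⁅b (Sum.inr m), b (Sum.inl n)⁆ = -(gam lam n m • b (Sum.inr (n + m))) := by
        rw [← lie_skew, hLB n m]; rfl
      simp [rmul, h1, Finsupp.single_apply]
  have := LinearMap.congr_fun h v
  simpa [rmul] using this

include hLL hLB in
lemma coord_rL_inr (k n : ℤ) (v : L) :
    b.repr ⁅v, b (Sum.inl n)⁆ (Sum.inr k) =
      -(gam lam n (k - n)) * b.repr v (Sum.inr (k - n)) := by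
  have h : (b.coord (Sum.inr k)).comp (rmul (b (Sum.inl n))) =
      (-(gam lam n (k - n))) • b.coord (Sum.inr (k - n)) := by
    apply b.ext
    rintro (m | m)
    · simp [rmul, hLL m n, Finsupp.single_apply]
    · have h1 : ⁅b (Sum.inr m), b (Sum.inl n)⁆ = -(gam lam n m • b (Sum.inr (n + m))) := by
        rw [← lie_skew, hLB n m]; rfl
      simp only [LinearMap.comp_apply, rmul, LinearMap.coe_mk, AddHom.coe_mk, h1,
        map_neg, map_smul, Module.Basis.coord_apply, Module.Basis.repr_self, LinearMap.smul_apply,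
        smul_eq_mul, Finsupp.single_apply]
      rcases eq_or_ne (n + m) k with rfl | h
      · simp [show n + m - n = m from by ring]
      · have h2 : ¬ (Sum.inr (n + m) : ℤ ⊕ ℤ) = Sum.inr k := by simpa using h
        have h3 : ¬ (Sum.inr m : ℤ ⊕ ℤ) = Sum.inr (k - n) := by
          simp only [Sum.inr.injEq]; omega
        simp [h2, h3]
  have := LinearMap.congr_fun h v
  simpa [rmul] using this

include hLB hBB in
lemma coord_rB_inl (k n : ℤ) (v : L) :
    b.repr ⁅v, b (Sum.inr n)⁆ (Sum.inl k) = 0 := by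
  have h : (b.coord (Sum.inl k)).comp (rmul (b (Sum.inr n))) = 0 := by
    apply b.ext
    rintro (m | m)
    · simp [rmul, hLB m n, Finsupp.single_apply]
    · simp [rmul, hBB m n]
  have := LinearMap.congr_fun h v
  simpa [rmul] using this

include hLB hBB in
lemma coord_rB_inr (k n : ℤ) (v : L) :
    b.repr ⁅v, b (Sum.inr n)⁆ (Sum.inr k) =
      gam lam (k - n) n * b.repr v (Sum.inl (k - n)) := by
  have h : (b.coord (Sum.inr k)).comp (rmul (b (Sum.inr n))) =
      (gam lam (k - n) n) • b.coord (Sum.inl (k - n)) := by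
    apply b.ext
    rintro (m | m)
    · have h1 : ⁅b (Sum.inl m), b (Sum.inr n)⁆ = gam lam m n • b (Sum.inr (m + n)) := hLB m n
      simp only [LinearMap.comp_apply, rmul, LinearMap.coe_mk, AddHom.coe_mk, h1,
        map_smul, Module.Basis.coord_apply, Module.Basis.repr_self, LinearMap.smul_apply,
        smul_eq_mul, Finsupp.single_apply]
      rcases eq_or_ne (m + n) k with rfl | h
      · simp [show m + n - n = m from by ring]
      · have h2 : ¬ (Sum.inr (m + n) : ℤ ⊕ ℤ) = Sum.inr k := by simpa using h
        have h3 : ¬ (Sum.inl m : ℤ ⊕ ℤ) = Sum.inl (k - n) := by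
          simp only [Sum.inl.injEq]; omega
        simp [h2, h3]
    · simp [rmul, hBB m n]
  have := LinearMap.congr_fun h v
  simpa [rmul] using this

include hLB in
lemma brkBL (n m : ℤ) :
    ⁅b (Sum.inr n), b (Sum.inl m)⁆ = (-(gam lam m n)) • b (Sum.inr (m + n)) := by
  rw [← lie_skew, hLB m n, neg_smul]
  rfl

include hLB in
lemma brkB0L (n : ℤ) : ⁅b (Sum.inr 0), b (Sum.inl n)⁆ = 0 := by
  rw [brkBL b lam hLB 0 n, gam_zero_right, neg_zero, zero_smul]

end brackets

lemma recon (n : ℤ) (v : L)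
    (h : ∀ i, i ≠ Sum.inl n → i ≠ Sum.inr n → b.repr v i = 0) :
    v = b.repr v (Sum.inl n) • b (Sum.inl n) + b.repr v (Sum.inr n) • b (Sum.inr n) := by
  apply b.repr.injective
  ext i
  rcases eq_or_ne i (Sum.inl n) with rfl | h1
  · simp [Finsupp.single_apply]
  · rcases eq_or_ne i (Sum.inr n) with rfl | h2
    · simp [Finsupp.single_apply]
    · simp [Finsupp.single_apply, Ne.symm h1, Ne.symm h2, h i h1 h2]


section surj
variable {lam} (hlam : lam ≠ some 0)
  (hLL : ∀ n m : ℤ,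
      ⁅b (Sum.inl n), b (Sum.inl m)⁆ = ((m : ℂ) - (n : ℂ)) • b (Sum.inl (n + m)))
  (hLB : ∀ n m : ℤ,
      ⁅b (Sum.inl n), b (Sum.inr m)⁆ =
        ((m : ℂ) - (if n + m = 0 then lamTerm lam n else 0)) • b (Sum.inr (n + m)))
  (hBB : ∀ n m : ℤ, ⁅b (Sum.inr n), b (Sum.inr m)⁆ = 0)

include hlam hLL hLB hBB in
lemma surj (dAb dl : LieDerivation ℂ L L)
    (hAb1 : ∀ n : ℤ, dAb (b (Sum.inl n)) = 0)
    (hAb2 : ∀ n : ℤ, dAb (b (Sum.inr n)) = b (Sum.inr n))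
    (hdlam1 : ∀ n : ℤ, dl (b (Sum.inl n)) =
      (lam.elim (1 : ℂ) fun l => if n = 0 then l + 1 else 1) • b (Sum.inr n))
    (hdlam2 : ∀ n : ℤ, dl (b (Sum.inr n)) = 0)
    (D : LieDerivation ℂ L L) :
    ∃ (x : L) (a u : ℂ), D = LieDerivation.ad ℂ L x + a • dAb + u • dl := by
  classical
  have hLB' : ∀ n m : ℤ, ⁅b (Sum.inl n), b (Sum.inr m)⁆ = gam lam n m • b (Sum.inr (n + m)) :=
    hLB
  set r : (ℤ ⊕ ℤ) →₀ ℂ := b.repr (D (b (Sum.inl 0))) with hrdef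
  set x₀ : L := b.repr.symm (Finsupp.onFinset r.support
      (fun i => if idx i = (0 : ℤ) then 0 else r i / (idx i : ℂ))
      (fun i hi => by
        rw [Finsupp.mem_support_iff]
        intro h0
        apply hi
        simp [h0])) with hx0def
  have hx0c : ∀ i, b.repr x₀ i = if idx i = (0 : ℤ) then 0 else r i / (idx i : ℂ) := by
    intro i
    rw [hx0def, LinearEquiv.apply_symm_apply]
    rfl
  set D₁ : LieDerivation ℂ L L := D + LieDerivation.ad ℂ L x₀ with hD₁def
  have hD1 : ∀ y, D₁ y = D y + ⁅x₀, y⁆ := by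
    intro y
    rw [hD₁def]
    simp
  -- coordinates of ⁅v, L_0⁆
  have hbr0 : ∀ (v : L) (i), b.repr ⁅v, b (Sum.inl 0)⁆ i = -(idx i : ℂ) * b.repr v i := by
    rintro v (k | k)
    · have := coord_rL_inl b lam hLL hLB k 0 v
      simpa [idx] using this
    · have := coord_rL_inr b lam hLL hLB k 0 v
      simpa [idx, gam_self] using this
  have hD₁0 : ∀ i, idx i ≠ 0 → b.repr (D₁ (b (Sum.inl 0))) i = 0 := by
    intro i hi
    have hci : (idx i : ℂ) ≠ 0 := Int.cast_ne_zero.2 hi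
    rw [hD1, map_add, Finsupp.add_apply, hbr0, hx0c, if_neg hi, ← hrdef]
    field_simp
    ring
  set cc : ℤ → ℂ := fun n => b.repr (D₁ (b (Sum.inl n))) (Sum.inl n) with hccdef
  set dd : ℤ → ℂ := fun n => b.repr (D₁ (b (Sum.inl n))) (Sum.inr n) with hdddef
  set ee : ℤ → ℂ := fun n => b.repr (D₁ (b (Sum.inr n))) (Sum.inl n) with heedef
  set ff : ℤ → ℂ := fun n => b.repr (D₁ (b (Sum.inr n))) (Sum.inr n) with hffdef
  have idx_ne : ∀ (i : ℤ ⊕ ℤ) (n : ℤ), i ≠ Sum.inl n → i ≠ Sum.inr n → idx i ≠ n := by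
    rintro (m | m) n h1 h2 <;> intro h <;> simp [idx] at h
    · exact h1 (by rw [h])
    · exact h2 (by rw [h])
  have hL0 : D₁ (b (Sum.inl 0)) = cc 0 • b (Sum.inl 0) + dd 0 • b (Sum.inr 0) :=
    recon b 0 _ (fun i h1 h2 => hD₁0 i (idx_ne i 0 h1 h2))
  have keyL : ∀ n : ℤ, (n : ℂ) • D₁ (b (Sum.inl n)) =
      ⁅b (Sum.inl 0), D₁ (b (Sum.inl n))⁆ + ⁅D₁ (b (Sum.inl 0)), b (Sum.inl n)⁆ := by
    intro n
    have h := D₁.apply_lie_eq_add (b (Sum.inl 0)) (b (Sum.inl n))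
    rw [brkL0 b lam hLL hLB (Sum.inl n)] at h
    simpa [idx] using h
  have hbrkD₁L0 : ∀ n : ℤ, ⁅D₁ (b (Sum.inl 0)), b (Sum.inl n)⁆ = (cc 0 * n) • b (Sum.inl n) := by
    intro n
    rw [hL0, add_lie, smul_lie, smul_lie, hLL 0 n, brkB0L b lam hLB n, smul_zero, add_zero,
      zero_add, smul_smul]
    norm_num
  have coordL : ∀ (n : ℤ) i, ((n : ℂ) - idx i) * b.repr (D₁ (b (Sum.inl n))) i
      = cc 0 * n * (if Sum.inl n = i then 1 else 0) := by
    intro n i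
    have h := congrArg (fun w => b.repr w i) (keyL n)
    simp only [map_add, map_smul, Finsupp.add_apply, coord_L0 b lam hLL hLB, hbrkD₁L0 n,
      Module.Basis.repr_self, Finsupp.smul_apply, Finsupp.single_apply, smul_eq_mul] at h
    linear_combination h
  have hp0 : cc 0 = 0 := by
    have h := coordL 1 (Sum.inl 1)
    simp [idx] at h
    linear_combination -h
  have hLn : ∀ n : ℤ, D₁ (b (Sum.inl n)) = cc n • b (Sum.inl n) + dd n • b (Sum.inr n) := by
    intro n
    refine recon b n _ (fun i h1 h2 => ?_)
    have h := coordL n i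
    rw [if_neg (fun he => h1 he.symm), mul_zero] at h
    have hne : ((n : ℂ) - idx i) ≠ 0 := by
      rw [sub_ne_zero]
      exact_mod_cast fun hc => (idx_ne i n h1 h2) (by exact_mod_cast hc.symm)
    exact (mul_eq_zero.1 h).resolve_left hne
  have hbrkD₁L0B : ∀ n : ℤ, ⁅D₁ (b (Sum.inl 0)), b (Sum.inr n)⁆ = 0 := by
    intro n
    rw [hL0, hp0, zero_smul, zero_add, smul_lie, hBB 0 n, smul_zero]
  have coordB : ∀ (n : ℤ) i, ((n : ℂ) - idx i) * b.repr (D₁ (b (Sum.inr n))) i = 0 := by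
    intro n i
    have h := D₁.apply_lie_eq_add (b (Sum.inl 0)) (b (Sum.inr n))
    rw [brkL0 b lam hLL hLB (Sum.inr n), hbrkD₁L0B n, add_zero, map_smul] at h
    have h2 := congrArg (fun w => b.repr w i) h
    simp only [map_smul, coord_L0 b lam hLL hLB, Finsupp.smul_apply, smul_eq_mul] at h2
    rw [show idx (Sum.inr n) = n from rfl] at h2
    linear_combination h2
  have hBn : ∀ n : ℤ, D₁ (b (Sum.inr n)) = ee n • b (Sum.inl n) + ff n • b (Sum.inr n) := by
    intro n
    refine recon b n _ (fun i h1 h2 => ?_)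
    have h := coordB n i
    have hne : ((n : ℂ) - idx i) ≠ 0 := by
      rw [sub_ne_zero]
      exact_mod_cast fun hc => (idx_ne i n h1 h2) (by exact_mod_cast hc.symm)
    exact (mul_eq_zero.1 h).resolve_left hne
  -- the relation from [B,B] = 0
  have hE : ∀ n m : ℤ, ee n * gam lam n m = ee m * gam lam m n := by
    intro n m
    have h := D₁.apply_lie_eq_add (b (Sum.inr n)) (b (Sum.inr m))
    rw [hBB n m, map_zero, hBn n, hBn m, lie_add, lie_smul, lie_smul, add_lie, smul_lie,
      smul_lie, brkBL b lam hLB n m, hBB n m, hLB' n m, smul_zero, add_zero,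
      smul_zero, add_zero, show m + n = n + m from add_comm m n] at h
    have h2 := congrArg (fun w => b.repr w (Sum.inr (n + m))) h.symm
    simp only [map_add, map_smul, Finsupp.add_apply, Module.Basis.repr_self, Finsupp.smul_apply,
      Finsupp.single_apply, smul_eq_mul, map_zero, Finsupp.coe_zero, Pi.zero_apply,
      eq_self_iff_true, if_true, reduceCtorEq, if_false, smul_neg, mul_neg, neg_mul] at h2
    linear_combination h2
  have hgam11 : gam lam (-1) 1 = 1 - lamTerm lam (-1) := by simp [gam]
  have hee1 : ee 1 = 0 := by
    have h2 : ee 2 = 2 * ee 1 := by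
      have h := hE 2 1
      rw [gam_ne lam (by norm_num : (2:ℤ) + 1 ≠ 0), gam_ne lam (by norm_num : (1:ℤ) + 2 ≠ 0)] at h
      push_cast at h
      linear_combination h
    have hm1 : ee (-1) = - ee 1 := by
      have h := hE (-1) 2
      rw [gam_ne lam (by norm_num : (-1:ℤ) + 2 ≠ 0), gam_ne lam (by norm_num : (2:ℤ) + (-1) ≠ 0)] at h
      push_cast at h
      linear_combination (1/2) * h - (1/2) * h2
    have h := hE 1 (-1)
    rw [show gam lam 1 (-1) = -1 - lamTerm lam 1 by simp [gam],
      show gam lam (-1) 1 = 1 - lamTerm lam (-1) by simp [gam], hm1] at h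
    -- h : ee 1 * (-1 - T1) = -ee 1 * (1 - T(-1))
    have hsum : ee 1 * (lamTerm lam 1 + lamTerm lam (-1)) = 0 := by linear_combination -h
    rcases mul_eq_zero.1 hsum with h' | h'
    · exact h'
    · exfalso
      rcases lam with _ | l
      · norm_num [lamTerm] at h'
      · have hl : l ≠ 0 := fun h0 => hlam (by rw [h0])
        rw [show lamTerm (some l) 1 + lamTerm (some l) (-1) = 2 * l by norm_num [lamTerm]] at h'
        exact hl (by linear_combination (1/2) * h')
  have hee0 : ∀ n : ℤ, ee n = 0 := by
    have he0 : ee 0 = 0 := by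
      have h := hE 1 0
      rw [gam_zero_right, gam_self] at h
      simpa using h.symm
    intro n
    rcases eq_or_ne n 0 with rfl | hn0
    · exact he0
    rcases eq_or_ne n (-1) with rfl | hnm1
    · have h := hE (-1) 2
      rw [gam_ne lam (by norm_num : (-1:ℤ) + 2 ≠ 0), gam_ne lam (by norm_num : (2:ℤ) + (-1) ≠ 0)] at h
      have h2 : ee 2 = 2 * ee 1 := by
        have h := hE 2 1
        rw [gam_ne lam (by norm_num : (2:ℤ) + 1 ≠ 0), gam_ne lam (by norm_num : (1:ℤ) + 2 ≠ 0)] at h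
        push_cast at h
        linear_combination h
      push_cast at h
      rw [h2, hee1] at h
      linear_combination (1/2) * h
    · have h := hE n 1
      rw [gam_ne lam (by omega : n + 1 ≠ 0), gam_ne lam (by omega : 1 + n ≠ 0), hee1] at h
      push_cast at h
      linear_combination h
  have hBff : ∀ n : ℤ, D₁ (b (Sum.inr n)) = ff n • b (Sum.inr n) := by
    intro n
    rw [hBn n, hee0 n, zero_smul, zero_add]
  -- relations from [L, L]
  have hCL : ∀ n m : ℤ, ((m : ℂ) - n) * cc (n + m) = cc m * ((m : ℂ) - n) + cc n * ((m : ℂ) - n) := by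
    intro n m
    have h := D₁.apply_lie_eq_add (b (Sum.inl n)) (b (Sum.inl m))
    rw [hLL n m, map_smul, hLn (n + m), hLn n, hLn m, lie_add, lie_smul, lie_smul, add_lie,
      smul_lie, smul_lie, hLL n m, hLB' n m, brkBL b lam hLB n m,
      show m + n = n + m from add_comm m n] at h
    have h2 := congrArg (fun w => b.repr w (Sum.inl (n + m))) h
    simp only [map_add, map_smul, smul_add, Finsupp.add_apply, Module.Basis.repr_self,
      Finsupp.smul_apply, Finsupp.single_apply, smul_eq_mul, reduceCtorEq, if_false,
      eq_self_iff_true, if_true, mul_zero, add_zero, zero_add] at h2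
    linear_combination h2
  have hCD : ∀ n m : ℤ, ((m : ℂ) - n) * dd (n + m) = dd m * gam lam n m - dd n * gam lam m n := by
    intro n m
    have h := D₁.apply_lie_eq_add (b (Sum.inl n)) (b (Sum.inl m))
    rw [hLL n m, map_smul, hLn (n + m), hLn n, hLn m, lie_add, lie_smul, lie_smul, add_lie,
      smul_lie, smul_lie, hLL n m, hLB' n m, brkBL b lam hLB n m,
      show m + n = n + m from add_comm m n] at h
    have h2 := congrArg (fun w => b.repr w (Sum.inr (n + m))) h
    simp only [map_add, map_smul, smul_add, Finsupp.add_apply, Module.Basis.repr_self,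
      Finsupp.smul_apply, Finsupp.single_apply, smul_eq_mul, reduceCtorEq, if_false,
      eq_self_iff_true, if_true, mul_zero, add_zero, zero_add, smul_neg, mul_neg,
      neg_mul] at h2
    linear_combination h2
  -- relations from [L, B]
  have hF : ∀ n m : ℤ, gam lam n m * ff (n + m) = ff m * gam lam n m + cc n * gam lam n m := by
    intro n m
    have h := D₁.apply_lie_eq_add (b (Sum.inl n)) (b (Sum.inr m))
    rw [hLB' n m, map_smul, hBff (n + m), hBff m, hLn n, lie_smul, add_lie, smul_lie,
      smul_lie, hLB' n m, hBB n m, smul_zero, add_zero] at h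
    have h2 := congrArg (fun w => b.repr w (Sum.inr (n + m))) h
    simp only [map_add, map_smul, Finsupp.add_apply, Module.Basis.repr_self, Finsupp.smul_apply,
      Finsupp.single_apply, smul_eq_mul, eq_self_iff_true, if_true, reduceCtorEq,
      if_false, mul_zero, add_zero, zero_add] at h2
    linear_combination h2
  -- solve for cc
  have hc : ∀ n m : ℤ, n ≠ m → cc (n + m) = cc n + cc m := by
    intro n m hnm
    have hne : ((m : ℂ) - n) ≠ 0 := sub_ne_zero.2 (by exact_mod_cast hnm.symm)
    have h : ((m : ℂ) - n) * cc (n + m) = ((m : ℂ) - n) * (cc n + cc m) := by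
      linear_combination hCL n m
    exact mul_left_cancel₀ hne h
  have hcm1 : cc (-1) = -cc 1 := by
    have h := hc 1 (-1) (by norm_num)
    norm_num at h
    rw [hp0] at h
    linear_combination -h

  -- cc is linear
  have hc2 : cc 2 = 2 * cc 1 := by
    have h13 := hc 1 3 (by norm_num)
    have h23 := hc 2 3 (by norm_num)
    have hm15 := hc (-1) 5 (by norm_num)
    norm_num at h13 h23 hm15
    rw [hcm1] at hm15
    linear_combination h13 - hm15 - h23
  have hcl : ∀ n : ℤ, cc n = (n : ℂ) * cc 1 := by
    intro n
    induction n using Int.induction_on with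
    | zero => simpa using hp0
    | succ k ih =>
      rcases eq_or_ne (k : ℤ) 1 with hk | hk
      · rw [hk]
        norm_num
        linear_combination hc2
      · have h := hc k 1 hk
        rw [ih] at h
        push_cast at h ⊢
        linear_combination h
    | pred k ih =>
      rcases eq_or_ne (k : ℤ) 1 with hk | hk
      · rw [hk]
        have h := hc 2 (-2) (by norm_num)
        norm_num at h
        rw [hp0, hc2] at h
        norm_num
        linear_combination -h
      · have h := hc (-(k : ℤ)) (-1) (by omega)
        rw [ih, hcm1] at h
        rw [show -(k : ℤ) + -1 = -(k : ℤ) - 1 from by ring] at h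
        push_cast at h ⊢
        linear_combination h
  -- ff is affine
  have hfa : ∀ n : ℤ, n ≠ 0 → ff n = (n : ℂ) * cc 1 + (ff 1 - cc 1) := by
    intro n hn
    have h := hF (n - 1) 1
    rw [gam_ne lam (by omega : n - 1 + 1 ≠ 0)] at h
    rw [show n - 1 + 1 = n from by ring] at h
    rw [hcl (n - 1)] at h
    push_cast at h
    linear_combination h
  have hff0 : ff 0 = ff 1 - cc 1 := by
    rcases lam with _ | l
    · have h := hF 1 (-1)
      rw [show (1 : ℤ) + -1 = 0 from by norm_num] at h
      rw [show gam none 1 (-1) = -2 from by norm_num [gam, lamTerm]] at h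
      rw [hfa (-1) (by norm_num), hcl 1] at h
      push_cast at h
      linear_combination (-1/2) * h
    · have h := hF (-1) 1
      rw [show (-1 : ℤ) + 1 = 0 from by norm_num] at h
      rw [show gam (some l) (-1) 1 = 1 from by norm_num [gam, lamTerm]] at h
      rw [hcl (-1)] at h
      push_cast at h
      linear_combination h
  have hfall : ∀ n : ℤ, ff n = (n : ℂ) * cc 1 + (ff 1 - cc 1) := by
    intro n
    rcases eq_or_ne n 0 with rfl | hn
    · push_cast
      linear_combination hff0
    · exact hfa n hn
  -- dd analysis
  have hCD' : ∀ n m : ℤ, n + m ≠ 0 →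
      ((m : ℂ) - n) * dd (n + m) = (m : ℂ) * dd m - (n : ℂ) * dd n := by
    intro n m hnm
    have h := hCD n m
    rw [gam_ne lam hnm, gam_ne lam (by omega : m + n ≠ 0)] at h
    linear_combination h
  have hdpos : ∀ k : ℕ, dd ((k : ℤ) + 1) = dd 1 + (k : ℂ) * (dd 2 - dd 1) := by
    intro k
    induction k with
    | zero => norm_num
    | succ k ih =>
      rcases Nat.eq_zero_or_pos k with rfl | hk
      · norm_num
      · have hkc : ((k : ℂ)) ≠ 0 := Nat.cast_ne_zero.2 (by omega)
        have h := hCD' 1 ((k : ℤ) + 1) (by omega)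
        rw [show (1 : ℤ) + ((k : ℤ) + 1) = (k : ℤ) + 1 + 1 from by ring, ih] at h
        push_cast at h ⊢
        apply mul_left_cancel₀ hkc
        linear_combination h
  have hdm1 : dd (-1) = dd 1 - 2 * (dd 2 - dd 1) := by
    have h := hCD' 3 (-1) (by norm_num)
    rw [show (3 : ℤ) + -1 = 2 from by norm_num] at h
    have h3 := hdpos 2
    norm_num at h3
    push_cast at h
    linear_combination h - 3 * h3
  have hdneg : ∀ k : ℕ, dd (-(k : ℤ) - 1) = dd 1 + (-(k : ℂ) - 2) * (dd 2 - dd 1) := by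
    intro k
    induction k with
    | zero =>
      norm_num
      linear_combination hdm1
    | succ k ih =>
      have hc0 : ((-(k : ℤ) - 2 : ℤ) : ℂ) ≠ 0 := Int.cast_ne_zero.2 (by omega)
      push_cast at hc0
      have h := hCD' (-(k : ℤ) - 2) 1 (by omega)
      rw [show -(k : ℤ) - 2 + 1 = -(k : ℤ) - 1 from by ring, ih] at h
      push_cast at h ⊢
      rw [show -((k : ℤ) + 1) - 1 = -(k : ℤ) - 2 from by ring]
      apply mul_left_cancel₀ hc0
      linear_combination h
  have hdall : ∀ n : ℤ, n ≠ 0 → dd n = dd 1 + ((n : ℂ) - 1) * (dd 2 - dd 1) := by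
    intro n hn
    rcases lt_or_gt_of_ne hn with h | h
    · obtain ⟨k, rfl⟩ : ∃ k : ℕ, n = -(k : ℤ) - 1 := ⟨(-n - 1).toNat, by omega⟩
      rw [hdneg k]
      push_cast
      ring
    · obtain ⟨k, rfl⟩ : ∃ k : ℕ, n = (k : ℤ) + 1 := ⟨(n - 1).toNat, by omega⟩
      rw [hdpos k]
      push_cast
      ring
  have hddn : ∀ n : ℤ, dd n = dd 1 * (lam.elim (1 : ℂ) fun l => if n = 0 then l + 1 else 1) := by
    have e1 := hCD 1 (-1)
    have e2 := hCD 2 (-2)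
    rw [show (1 : ℤ) + -1 = 0 from by norm_num] at e1
    rw [show (2 : ℤ) + -2 = 0 from by norm_num] at e2
    rw [hdall (-1) (by norm_num)] at e1
    rw [hdall (-2) (by norm_num)] at e2
    rcases lam with _ | l
    · rw [show gam none 1 (-1) = -2 from by norm_num [gam, lamTerm],
        show gam none (-1) 1 = 0 from by norm_num [gam, lamTerm]] at e1
      rw [show gam none 2 (-2) = -6 from by norm_num [gam, lamTerm],
        show gam none (-2) 2 = -2 from by norm_num [gam, lamTerm]] at e2
      push_cast at e1 e2
      have hv : dd 2 - dd 1 = 0 := by linear_combination (1/6) * e1 - (1/12) * e2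
      intro n
      simp only [Option.elim]
      rcases eq_or_ne n 0 with rfl | hn
      · rw [mul_one]
        linear_combination (-1/2) * e1 - 2 * hv
      · rw [mul_one, hdall n hn, hv, mul_zero, add_zero]
    · have hl : l ≠ 0 := fun h0 => hlam (by rw [h0])
      rw [show gam (some l) 1 (-1) = -1 - 2 * l from by push_cast [gam, lamTerm]; ring,
        show gam (some l) (-1) 1 = 1 from by norm_num [gam, lamTerm]] at e1
      rw [show gam (some l) 2 (-2) = -2 - 6 * l from by push_cast [gam, lamTerm]; ring,
        show gam (some l) (-2) 2 = 2 - 2 * l from by push_cast [gam, lamTerm]; ring] at e2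
      push_cast at e1 e2
      have hvl : (dd 2 - dd 1) * l = 0 := by linear_combination (-1/12) * e2 + (1/6) * e1
      have hv : dd 2 - dd 1 = 0 := (mul_eq_zero.1 hvl).resolve_right hl
      intro n
      simp only [Option.elim]
      rcases eq_or_ne n 0 with rfl | hn
      · rw [if_pos rfl]
        linear_combination (-1/2) * e1 - (1 + 2 * l) * hv
      · rw [if_neg hn, mul_one, hdall n hn, hv, mul_zero, add_zero]
  -- assembly
  have hads : ∀ (x y : L), (LieDerivation.ad ℂ L x) y = ⁅x, y⁆ := fun x y => by simp
  have hED : ∀ j, D₁ (b j) =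
      (LieDerivation.ad ℂ L (cc 1 • b (Sum.inl 0)) + (ff 1 - cc 1) • dAb + dd 1 • dl) (b j) := by
    rintro (n | n)
    · rw [hLn n]
      simp only [LieDerivation.add_apply, LieDerivation.smul_apply, hAb1, hdlam1, smul_zero,
        add_zero, hads]
      rw [smul_lie, brkL0 b lam hLL hLB (Sum.inl n), hcl n, hddn n]
      simp only [idx, Sum.elim_inl, id_eq]
      rw [smul_smul, smul_smul]
      rw [mul_comm (cc 1) ((n : ℂ))]
    · rw [hBff n]
      simp only [LieDerivation.add_apply, LieDerivation.smul_apply, hAb2, hdlam2, smul_zero,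
        add_zero, hads]
      rw [smul_lie, brkL0 b lam hLL hLB (Sum.inr n), hfall n]
      simp only [idx, Sum.elim_inr, id_eq]
      rw [smul_smul, add_smul]
      rw [mul_comm (cc 1) ((n : ℂ))]
  have hD₁E : D₁ = LieDerivation.ad ℂ L (cc 1 • b (Sum.inl 0)) + (ff 1 - cc 1) • dAb
      + dd 1 • dl := by
    have h : (D₁ : L →ₗ[ℂ] L) = ((LieDerivation.ad ℂ L (cc 1 • b (Sum.inl 0))
        + (ff 1 - cc 1) • dAb + dd 1 • dl : LieDerivation ℂ L L) : L →ₗ[ℂ] L) :=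
      b.ext fun j => by simpa using hED j
    ext y
    simpa using LinearMap.congr_fun h y
  refine ⟨cc 1 • b (Sum.inl 0) - x₀, ff 1 - cc 1, dd 1, ?_⟩
  have hDD : D = D₁ - LieDerivation.ad ℂ L x₀ := by
    rw [hD₁def]
    abel
  rw [hDD, hD₁E, map_sub]
  abel

include hLL hLB hBB in
lemma key_indep (x : L) (s t : ℂ)
    (hxL : ∀ n : ℤ, ⁅x, b (Sum.inl n)⁆ =
      (t * (lam.elim (1 : ℂ) fun l => if n = 0 then l + 1 else 1)) • b (Sum.inr n))
    (hxB : ∀ n : ℤ, ⁅x, b (Sum.inr n)⁆ = s • b (Sum.inr n)) :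
    s = 0 ∧ t = 0 := by
  have hxinl : ∀ m : ℤ, b.repr x (Sum.inl m) = 0 := by
    intro m
    have h := coord_rL_inl b lam hLL hLB (2 * m + 1) (m + 1) x
    have h2 : b.repr ⁅x, b (Sum.inl (m + 1))⁆ (Sum.inl (2 * m + 1)) = 0 := by
      rw [hxL (m + 1)]
      simp
    rw [h2, show 2 * m + 1 - (m + 1) = m from by ring] at h
    push_cast at h
    linear_combination -h
  constructor
  · have h := coord_rB_inr b lam hLB hBB 1 1 x
    rw [hxB 1, show (1 : ℤ) - 1 = 0 from by ring, hxinl 0, mul_zero] at h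
    simpa using h
  · have hcoef : (lam.elim (1 : ℂ) fun l => if (1 : ℤ) = 0 then l + 1 else 1) = 1 := by
      rcases lam with _ | l <;> simp
    have h := coord_rL_inr b lam hLL hLB 1 1 x
    rw [hxL 1, show (1 : ℤ) - 1 = 0 from by ring, gam_zero_right, hcoef] at h
    simpa using h

include hLB hBB in
lemma central (y : L) : ⁅b (Sum.inr 0), y⁆ = 0 := by
  have h : lmul (b (Sum.inr 0)) = (0 : L →ₗ[ℂ] L) := by
    apply b.ext
    rintro (m | m)
    · simpa [lmul] using brkB0L b lam hLB m
    · simpa [lmul] using hBB 0 m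
  simpa [lmul] using LinearMap.congr_fun h y

end surj
end Stmt19

/-- The submodule of inner derivations `ad_x : y ↦ ⁅x, y⁆` inside the module of all
derivations of a complex Lie algebra. -/
noncomputable def innerDerivations (L : Type) [LieRing L] [LieAlgebra ℂ L] :
    Submodule ℂ (LieDerivation ℂ L L) where
  carrier := {D | ∃ x : L, ∀ y : L, D y = ⁅x, y⁆}
  add_mem' := by
    rintro D₁ D₂ ⟨x₁, h₁⟩ ⟨x₂, h₂⟩
    exact ⟨x₁ + x₂, fun y => by
      simp [LieDerivation.add_apply, h₁ y, h₂ y, add_lie]⟩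
  zero_mem' := ⟨0, fun y => by simp⟩
  smul_mem' := by
    rintro c D ⟨x, h⟩
    exact ⟨c • x, fun y => by simp [LieDerivation.smul_apply, h y, smul_lie]⟩

/-- for `λ ≠ 0`, `Der(W_B(λ)) = Inn(W_B(λ)) ⊕ ℂ·d_Ab ⊕ ℂ·d_λ^B`, an internal
direct sum; consequently the space of outer derivations is two-dimensional. -/
theorem stmt_19 (lam : Option ℂ) (hlam : lam ≠ some 0)
    (L : Type) [LieRing L] [LieAlgebra ℂ L]
    (b : Module.Basis (ℤ ⊕ ℤ) ℂ L)
    (hLL : ∀ n m : ℤ,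
      ⁅b (Sum.inl n), b (Sum.inl m)⁆ = ((m : ℂ) - (n : ℂ)) • b (Sum.inl (n + m)))
    (hLB : ∀ n m : ℤ,
      ⁅b (Sum.inl n), b (Sum.inr m)⁆ =
        ((m : ℂ) - (if n + m = 0 then lamTerm lam n else 0)) • b (Sum.inr (n + m)))
    (hBB : ∀ n m : ℤ, ⁅b (Sum.inr n), b (Sum.inr m)⁆ = 0)
    (dAb dlam : LieDerivation ℂ L L)
    (hAb1 : ∀ n : ℤ, dAb (b (Sum.inl n)) = 0)
    (hAb2 : ∀ n : ℤ, dAb (b (Sum.inr n)) = b (Sum.inr n))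
    (hdlam1 : ∀ n : ℤ, dlam (b (Sum.inl n)) =
      (lam.elim (1 : ℂ) fun l => if n = 0 then l + 1 else 1) • b (Sum.inr n))
    (hdlam2 : ∀ n : ℤ, dlam (b (Sum.inr n)) = 0) :
    DirectSum.IsInternal
      ![innerDerivations L, Submodule.span ℂ {dAb}, Submodule.span ℂ {dlam}] ∧
    Module.finrank ℂ (LieDerivation ℂ L L ⧸ innerDerivations L) = 2 := by
  classical
  set S0 := innerDerivations L with hS0
  set S1 := Submodule.span ℂ {dAb} with hS1
  set S2 := Submodule.span ℂ {dlam} with hS2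
  have hads : ∀ (x y : L), (LieDerivation.ad ℂ L x) y = ⁅x, y⁆ := fun x y => by simp
  have hadmem : ∀ x : L, LieDerivation.ad ℂ L x ∈ S0 := fun x => ⟨x, fun y => hads x y⟩
  have hsup : S0 ⊔ S1 ⊔ S2 = ⊤ := by
    rw [eq_top_iff]
    intro D _
    obtain ⟨x, a, u, rfl⟩ := Stmt19.surj b hlam hLL hLB hBB dAb dlam hAb1 hAb2 hdlam1 hdlam2 D
    exact Submodule.add_mem _ (Submodule.add_mem _
      (Submodule.mem_sup_left (Submodule.mem_sup_left (hadmem x)))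
      (Submodule.mem_sup_left (Submodule.mem_sup_right
        (Submodule.smul_mem _ _ (Submodule.mem_span_singleton_self dAb)))))
      (Submodule.mem_sup_right (Submodule.smul_mem _ _ (Submodule.mem_span_singleton_self dlam)))
  have case0 : ∀ D, D ∈ S0 → D ∈ S1 ⊔ S2 → D = 0 := by
    intro D hD0 hD12
    obtain ⟨x, hx⟩ : ∃ x : L, ∀ y : L, D y = ⁅x, y⁆ := hD0
    obtain ⟨E1, hE1, E2, hE2, hDE⟩ := Submodule.mem_sup.1 hD12
    obtain ⟨sc, rfl⟩ := Submodule.mem_span_singleton.1 hE1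
    obtain ⟨tc, rfl⟩ := Submodule.mem_span_singleton.1 hE2
    have hxL : ∀ n : ℤ, ⁅x, b (Sum.inl n)⁆ =
        (tc * (lam.elim (1 : ℂ) fun l => if n = 0 then l + 1 else 1)) • b (Sum.inr n) := by
      intro n
      have h := congrArg (fun E : LieDerivation ℂ L L => E (b (Sum.inl n))) hDE
      simp only [LieDerivation.add_apply, LieDerivation.smul_apply, hAb1, hdlam1, smul_zero,
        zero_add, smul_smul] at h
      rw [hx (b (Sum.inl n))] at h
      exact h.symm
    have hxB : ∀ n : ℤ, ⁅x, b (Sum.inr n)⁆ = sc • b (Sum.inr n) := by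
      intro n
      have h := congrArg (fun E : LieDerivation ℂ L L => E (b (Sum.inr n))) hDE
      simp only [LieDerivation.add_apply, LieDerivation.smul_apply, hAb2, hdlam2, smul_zero,
        add_zero] at h
      rw [hx (b (Sum.inr n))] at h
      exact h.symm
    obtain ⟨hs, ht⟩ := Stmt19.key_indep b hLL hLB hBB x sc tc hxL hxB
    rw [← hDE, hs, ht, zero_smul, zero_smul, add_zero]
  have case1 : ∀ D, D ∈ S1 → D ∈ S0 ⊔ S2 → D = 0 := by
    intro D hD1 hD02
    obtain ⟨sc, rfl⟩ := Submodule.mem_span_singleton.1 hD1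
    obtain ⟨E1, hE1, E2, hE2, hDE⟩ := Submodule.mem_sup.1 hD02
    obtain ⟨x, hx⟩ : ∃ x : L, ∀ y : L, E1 y = ⁅x, y⁆ := hE1
    obtain ⟨tc, rfl⟩ := Submodule.mem_span_singleton.1 hE2
    have hxL : ∀ n : ℤ, ⁅x, b (Sum.inl n)⁆ =
        ((-tc) * (lam.elim (1 : ℂ) fun l => if n = 0 then l + 1 else 1)) • b (Sum.inr n) := by
      intro n
      have h := congrArg (fun E : LieDerivation ℂ L L => E (b (Sum.inl n))) hDE
      simp only [LieDerivation.add_apply, LieDerivation.smul_apply, hAb1, hdlam1, smul_zero,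
        smul_smul] at h
      rw [hx (b (Sum.inl n))] at h
      rw [neg_mul, neg_smul]
      exact eq_neg_of_add_eq_zero_left h
    have hxB : ∀ n : ℤ, ⁅x, b (Sum.inr n)⁆ = sc • b (Sum.inr n) := by
      intro n
      have h := congrArg (fun E : LieDerivation ℂ L L => E (b (Sum.inr n))) hDE
      simp only [LieDerivation.add_apply, LieDerivation.smul_apply, hAb2, hdlam2, smul_zero,
        add_zero] at h
      rw [hx (b (Sum.inr n))] at h
      exact h
    obtain ⟨hs, ht⟩ := Stmt19.key_indep b hLL hLB hBB x sc (-tc) hxL hxB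
    rw [hs, zero_smul]
  have case2 : ∀ D, D ∈ S2 → D ∈ S0 ⊔ S1 → D = 0 := by
    intro D hD2 hD01
    obtain ⟨tc, rfl⟩ := Submodule.mem_span_singleton.1 hD2
    obtain ⟨E1, hE1, E2, hE2, hDE⟩ := Submodule.mem_sup.1 hD01
    obtain ⟨x, hx⟩ : ∃ x : L, ∀ y : L, E1 y = ⁅x, y⁆ := hE1
    obtain ⟨sc, rfl⟩ := Submodule.mem_span_singleton.1 hE2
    have hxL : ∀ n : ℤ, ⁅x, b (Sum.inl n)⁆ =
        (tc * (lam.elim (1 : ℂ) fun l => if n = 0 then l + 1 else 1)) • b (Sum.inr n) := by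
      intro n
      have h := congrArg (fun E : LieDerivation ℂ L L => E (b (Sum.inl n))) hDE
      simp only [LieDerivation.add_apply, LieDerivation.smul_apply, hAb1, hdlam1, smul_zero,
        add_zero, smul_smul] at h
      rw [hx (b (Sum.inl n))] at h
      exact h
    have hxB : ∀ n : ℤ, ⁅x, b (Sum.inr n)⁆ = (-sc) • b (Sum.inr n) := by
      intro n
      have h := congrArg (fun E : LieDerivation ℂ L L => E (b (Sum.inr n))) hDE
      simp only [LieDerivation.add_apply, LieDerivation.smul_apply, hAb2, hdlam2, smul_zero,
        zero_add] at h
      rw [hx (b (Sum.inr n))] at h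
      rw [neg_smul]
      exact eq_neg_of_add_eq_zero_left h
    obtain ⟨hs, ht⟩ := Stmt19.key_indep b hLL hLB hBB x (-sc) tc hxL hxB
    rw [ht, zero_smul]
  have hdisj0 : Disjoint S0 (S1 ⊔ S2) := Submodule.disjoint_def.2 case0
  have hdisj1 : Disjoint S1 (S0 ⊔ S2) := Submodule.disjoint_def.2 case1
  have hdisj2 : Disjoint S2 (S0 ⊔ S1) := Submodule.disjoint_def.2 case2
  have hind : iSupIndep ![S0, S1, S2] := by
    rw [iSupIndep_def]
    intro i
    fin_cases i
    · refine hdisj0.mono_right ?_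
      apply iSup_le
      intro j
      apply iSup_le
      intro hj
      fin_cases j
      · exact absurd rfl hj
      · exact le_sup_left
      · exact le_sup_right
    · refine hdisj1.mono_right ?_
      apply iSup_le
      intro j
      apply iSup_le
      intro hj
      fin_cases j
      · exact le_sup_left
      · exact absurd rfl hj
      · exact le_sup_right
    · refine hdisj2.mono_right ?_
      apply iSup_le
      intro j
      apply iSup_le
      intro hj
      fin_cases j
      · exact le_sup_left
      · exact le_sup_right
      · exact absurd rfl hj
  have hiSup : ⨆ i, ![S0, S1, S2] i = ⊤ := by
    apply le_antisymm le_top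
    rw [← hsup]
    refine sup_le (sup_le ?_ ?_) ?_
    · exact le_iSup ![S0, S1, S2] 0
    · exact le_iSup ![S0, S1, S2] 1
    · exact le_iSup ![S0, S1, S2] 2
  constructor
  · exact DirectSum.isInternal_submodule_of_iSupIndep_of_iSup_eq_top hind hiSup
  · have hcompl : IsCompl S0 (S1 ⊔ S2) :=
      ⟨hdisj0, codisjoint_iff.2 (by rw [← sup_assoc]; exact hsup)⟩
    have e := Submodule.quotientEquivOfIsCompl S0 (S1 ⊔ S2) hcompl
    rw [LinearEquiv.finrank_eq e]
    have hspan : S1 ⊔ S2 = Submodule.span ℂ (Set.range ![dAb, dlam]) := by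
      rw [show Set.range ![dAb, dlam] = {dAb} ∪ {dlam} by
        ext z
        simp [Fin.exists_fin_two], Submodule.span_union]
    rw [hspan]
    have hli : LinearIndependent ℂ ![dAb, dlam] := by
      rw [LinearIndependent.pair_iff]
      intro s t hst
      have h1 := congrArg (fun E : LieDerivation ℂ L L => E (b (Sum.inr 1))) hst
      simp only [LieDerivation.add_apply, LieDerivation.smul_apply, hAb2, hdlam2,
        smul_zero, add_zero, LieDerivation.zero_apply] at h1
      have hs : s = 0 := (smul_eq_zero.1 h1).resolve_right (b.ne_zero (Sum.inr 1))
      have h2 := congrArg (fun E : LieDerivation ℂ L L => E (b (Sum.inl 1))) hst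
      simp only [LieDerivation.add_apply, LieDerivation.smul_apply, hAb1, hdlam1,
        smul_zero, zero_add, LieDerivation.zero_apply, smul_smul] at h2
      have hcoef : (lam.elim (1 : ℂ) fun l => if (1 : ℤ) = 0 then l + 1 else 1) = 1 := by
        rcases lam with _ | l <;> simp
      rw [hcoef, mul_one] at h2
      have ht : t = 0 := (smul_eq_zero.1 h2).resolve_right (b.ne_zero (Sum.inr 1))
      exact ⟨hs, ht⟩
    rw [finrank_span_eq_card hli]
    simp
end
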